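/- arXiv:1905.01435 — 5 statements merged into one kernel-verified Lean document; each statement's English description precedes it below -/
import Mathlib

section
/- Let d, T be positive integers and let y_1, ..., y_T be vectors in ℝ^d with ‖y_t‖₂ ≤ 1 for all t. Define U_0 = I_d (the d×d identity matrix) and U_t = U_{t-1} + y_t y_tᵀ for t ≥ 1. Then ∑_{t=1}^{T} y_tᵀ U_{t-1}^{-1} y_t ≤ 2 ln(det(U_T)). -/
open Matrix BigOperators

lemma psd_vecMulVec (d : ℕ) (v : Fin d → ℝ) : (vecMulVec v v).PosSemidef := by
  have h : vecMulVec v v = (Matrix.replicateRow Unit v)ᴴ * Matrix.replicateRow Unit v := by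
    rw [Matrix.conjTranspose_replicateRow]
    simp [Matrix.vecMulVec_eq Unit]
  rw [h]
  exact Matrix.posSemidef_conjTranspose_mul_self _

lemma half_le_log_one_add {s : ℝ} (h0 : 0 ≤ s) (h1 : s ≤ 1) :
    s ≤ 2 * Real.log (1 + s) := by
  have hpos : (0:ℝ) < 1 + s := by linarith
  have hinv : (0:ℝ) < (1 + s)⁻¹ := inv_pos.mpr hpos
  have hlog := Real.log_le_sub_one_of_pos hinv
  rw [Real.log_inv] at hlog
  have hmul : (1 + s)⁻¹ * (1 + s) = 1 := inv_mul_cancel₀ (ne_of_gt hpos)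
  nlinarith [Real.log_le_sub_one_of_pos hpos]

/-- **Elliptical potential lemma.** -/
theorem elliptical_potential
    (d T : ℕ) (hd : 0 < d) (hT : 0 < T)
    (y : Fin T → Fin d → ℝ)
    (hy : ∀ t, Real.sqrt (∑ i, y t i ^ 2) ≤ 1)
    (U : ℕ → Matrix (Fin d) (Fin d) ℝ)
    (hU0 : U 0 = 1)
    (hUsucc : ∀ t : Fin T, U ((t : ℕ) + 1) = U t + vecMulVec (y t) (y t)) :
    ∑ t : Fin T, y t ⬝ᵥ (U t)⁻¹ *ᵥ y t ≤ 2 * Real.log (U T).det := by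
  -- norms of y are at most 1 (squared form)
  have hy2 : ∀ t, ∑ i, y t i ^ 2 ≤ 1 := by
    intro t
    have hnn : (0:ℝ) ≤ ∑ i, y t i ^ 2 := Finset.sum_nonneg fun i _ => sq_nonneg _
    have := Real.sq_sqrt hnn
    nlinarith [hy t, Real.sqrt_nonneg (∑ i, y t i ^ 2)]
  -- U n - 1 is PSD for all n ≤ T
  have hPSD : ∀ n : ℕ, n ≤ T → (U n - 1).PosSemidef := by
    intro n
    induction n with
    | zero => intro _; simp [hU0]; exact Matrix.PosSemidef.zero
    | succ k ih =>
      intro hk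
      have hkT : k < T := Nat.lt_of_succ_le hk
      have := hUsucc ⟨k, hkT⟩
      simp only [Fin.val_mk] at this
      rw [this]
      have : U k + vecMulVec (y ⟨k, hkT⟩) (y ⟨k, hkT⟩) - 1
          = (U k - 1) + vecMulVec (y ⟨k, hkT⟩) (y ⟨k, hkT⟩) := by abel
      rw [this]
      exact (ih (le_of_lt hkT)).add (psd_vecMulVec d _)
  -- U n is PosDef for all n ≤ T
  have hPD : ∀ n : ℕ, n ≤ T → (U n).PosDef := by
    intro n hn
    have : U n = 1 + (U n - 1) := by abel
    rw [this]
    exact Matrix.PosDef.add_posSemidef Matrix.PosDef.one (hPSD n hn)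
  -- abbreviation for the potential terms
  set s : Fin T → ℝ := fun t => y t ⬝ᵥ (U t)⁻¹ *ᵥ y t with hs
  -- each s t is nonneg
  have hs_nonneg : ∀ t : Fin T, 0 ≤ s t := by
    intro t
    have hinv : ((U t)⁻¹).PosSemidef :=
      ((hPD t (le_of_lt t.isLt)).inv).posSemidef
    have := hinv.re_dotProduct_nonneg (y t)
    simpa using this
  -- each s t is at most 1
  have hs_le_one : ∀ t : Fin T, s t ≤ 1 := by
    intro t
    have hpd := hPD t (le_of_lt t.isLt)
    set z : Fin d → ℝ := (U t)⁻¹ *ᵥ y t with hz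
    have hunit : IsUnit (U t).det := isUnit_iff_ne_zero.mpr hpd.det_pos.ne'
    have hUz : U t *ᵥ z = y t := by
      rw [hz, Matrix.mulVec_mulVec, Matrix.mul_nonsing_inv _ hunit, Matrix.one_mulVec]
    -- z ⬝ᵥ z ≤ z ⬝ᵥ (U t *ᵥ z) = z ⬝ᵥ y t = s t
    have hkey : z ⬝ᵥ z ≤ s t := by
      have hpsd := hPSD t (le_of_lt t.isLt)
      have := hpsd.re_dotProduct_nonneg z
      simp only [RCLike.star_def, star_trivial, RCLike.re_to_real] at this
      have h1 : z ⬝ᵥ ((U t - 1) *ᵥ z) = z ⬝ᵥ (U t *ᵥ z) - z ⬝ᵥ z := by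
        rw [Matrix.sub_mulVec, dotProduct_sub]
        simp
      rw [h1, hUz] at this
      have h2 : z ⬝ᵥ y t = y t ⬝ᵥ z := dotProduct_comm _ _
      rw [h2] at this
      linarith [this]
    -- Cauchy-Schwarz: s t ^ 2 ≤ (∑ y²) (∑ z²) ≤ z ⬝ᵥ z ≤ s t
    have hcs : (s t) ^ 2 ≤ (∑ i, y t i ^ 2) * (∑ i, z i ^ 2) := by
      have := Finset.sum_mul_sq_le_sq_mul_sq Finset.univ (y t) z
      simpa [hs, dotProduct, hz] using this
    have hzz : ∑ i, z i ^ 2 = z ⬝ᵥ z := by simp [dotProduct, sq]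
    have hz_nonneg : (0:ℝ) ≤ ∑ i, z i ^ 2 := Finset.sum_nonneg fun i _ => sq_nonneg _
    have h3 : (s t) ^ 2 ≤ s t := by
      calc (s t) ^ 2 ≤ (∑ i, y t i ^ 2) * (∑ i, z i ^ 2) := hcs
        _ ≤ 1 * (∑ i, z i ^ 2) := by
            apply mul_le_mul_of_nonneg_right (hy2 t) hz_nonneg
        _ = z ⬝ᵥ z := by rw [one_mul, hzz]
        _ ≤ s t := hkey
    nlinarith [sq_nonneg (s t - 1)]
  -- determinant recursion
  have hdet : ∀ t : Fin T,
      Real.log (U ((t:ℕ) + 1)).det = Real.log (U t).det + Real.log (1 + s t) := by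
    intro t
    have hpd := hPD t (le_of_lt t.isLt)
    have hunit : IsUnit (U t).det := isUnit_iff_ne_zero.mpr hpd.det_pos.ne'
    have hvmv : vecMulVec (y t) (y t) = Matrix.replicateCol Unit (y t) * Matrix.replicateRow Unit (y t) :=
      Matrix.vecMulVec_eq Unit (y t) (y t)
    have hd1 : (U ((t:ℕ) + 1)).det = (U t).det * (1 + s t) := by
      rw [hUsucc t, hvmv, Matrix.det_add_replicateCol_mul_replicateRow hunit]
      congr 1
      rw [Matrix.det_unique]
      simp only [Matrix.add_apply, Matrix.one_apply_eq]
      congr 1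
      simp [Matrix.mul_apply, hs, dotProduct, Matrix.mulVec, dotProduct, Finset.sum_mul,
        Finset.mul_sum]
      rw [Finset.sum_comm]
      apply Finset.sum_congr rfl
      intro i _
      apply Finset.sum_congr rfl
      intro j _
      ring
    rw [hd1, Real.log_mul hpd.det_pos.ne' (by nlinarith [hs_nonneg t])]
  -- telescoping sum
  have htel : ∑ t : Fin T, Real.log (1 + s t) = Real.log (U T).det := by
    have h1 : ∀ t : Fin T, Real.log (1 + s t)
        = Real.log (U ((t:ℕ) + 1)).det - Real.log (U t).det := by
      intro t; rw [hdet t]; ring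
    rw [Finset.sum_congr rfl (fun t _ => h1 t)]
    rw [Fin.sum_univ_eq_sum_range (fun k => Real.log (U (k + 1)).det - Real.log (U k).det)]
    rw [Finset.sum_range_sub (fun k => Real.log (U k).det)]
    simp [hU0]
  calc ∑ t : Fin T, s t ≤ ∑ t : Fin T, 2 * Real.log (1 + s t) :=
        Finset.sum_le_sum fun t _ => half_le_log_one_add (hs_nonneg t) (hs_le_one t)
    _ = 2 * ∑ t : Fin T, Real.log (1 + s t) := by rw [Finset.mul_sum]
    _ = 2 * Real.log (U T).det := by rw [htel]
end

section
/- Let d, T be positive integers and let y_1, ..., y_T be vectors in ℝ^d with ‖y_t‖₂ ≤ 1 for all t. Define U_0 = I_d and U_t = U_{t-1} + y_t y_tᵀ for t ≥ 1. Then ∑_{t=1}^{T} √(y_tᵀ U_{t-1}^{-1} y_t) ≤ √(2 T ln(det(U_T))) ≤ √(2 d T ln(1 + T/d)). -/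
open Matrix BigOperators

namespace EPLaux

variable {d : ℕ}

lemma outer_mulVec (u v x : Fin d → ℝ) :
    vecMulVec u v *ᵥ x = (v ⬝ᵥ x) • u := by
  ext i
  simp only [mulVec, vecMulVec_apply, dotProduct, Pi.smul_apply, smul_eq_mul,
    Finset.sum_mul]
  exact Finset.sum_congr rfl fun j _ => by ring

lemma posSemidef_outer (u : Fin d → ℝ) : (vecMulVec u u).PosSemidef := by
  refine posSemidef_iff_dotProduct_mulVec.mpr ⟨?_, fun x => ?_⟩
  · ext i j
    simp [conjTranspose_apply, vecMulVec_apply, mul_comm]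
  · rw [outer_mulVec, dotProduct_smul, star_trivial, smul_eq_mul, dotProduct_comm]
    exact mul_self_nonneg _

lemma det_add_outer {A : Matrix (Fin d) (Fin d) ℝ} (hA : IsUnit A.det) (u : Fin d → ℝ) :
    (A + vecMulVec u u).det = A.det * (1 + u ⬝ᵥ A⁻¹ *ᵥ u) := by
  rw [vecMulVec_eq Unit, det_add_replicateCol_mul_replicateRow hA]
  congr 1
  rw [det_unique]
  simp only [Matrix.add_apply, Matrix.one_apply_eq, Matrix.mul_apply, replicateRow_apply, replicateCol_apply,
    mulVec, dotProduct, Finset.univ_unique, Finset.sum_singleton]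
  congr 1
  simp only [Finset.sum_mul, Finset.mul_sum]
  rw [Finset.sum_comm]
  exact Finset.sum_congr rfl fun i _ => Finset.sum_congr rfl fun j _ => by ring

lemma half_le_log {x : ℝ} (h0 : 0 ≤ x) (h1 : x ≤ 1) : x ≤ 2 * Real.log (1 + x) := by
  have hx : (0:ℝ) < 1 + x := by linarith
  have h := Real.log_le_sub_one_of_pos (show (0:ℝ) < (1+x)⁻¹ by positivity)
  rw [Real.log_inv] at h
  have hinv : (1+x)⁻¹ * (1+x) = 1 := inv_mul_cancel₀ (ne_of_gt hx)
  nlinarith [h, hinv, sq_nonneg x]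

end EPLaux

namespace EPLaux2
open EPLaux

lemma trace_eq_sum_eigenvalues {d : ℕ} {A : Matrix (Fin d) (Fin d) ℝ} (hA : A.IsHermitian) :
    A.trace = ∑ i, hA.eigenvalues i := by
  conv_lhs => rw [hA.spectral_theorem, Unitary.conjStarAlgAut_apply]
  rw [Matrix.trace_mul_comm, ← Matrix.mul_assoc,
    (Matrix.mem_unitaryGroup_iff').mp (Matrix.IsHermitian.eigenvectorUnitary hA).2, one_mul,
    Matrix.trace_diagonal]
  simp

lemma logdet_le {d : ℕ} (hd : 0 < d) {A : Matrix (Fin d) (Fin d) ℝ} (hA : A.PosDef) :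
    Real.log A.det ≤ d * Real.log (A.trace / d) := by
  have hH := hA.1
  set l := hH.eigenvalues with hl
  have hpos : ∀ i, 0 < l i := hA.eigenvalues_pos
  have hdet : A.det = ∏ i, l i := by
    have := hH.det_eq_prod_eigenvalues
    simpa using this
  have htr : A.trace = ∑ i, l i := trace_eq_sum_eigenvalues hH
  have hgm := Real.geom_mean_le_arith_mean_weighted Finset.univ (fun _ => (d:ℝ)⁻¹) l
    (fun _ _ => by positivity)
    (by simp [Finset.card_univ]; field_simp)
    (fun i _ => (hpos i).le)
  have hsum : ∑ i, (d:ℝ)⁻¹ * l i = A.trace / d := by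
    rw [htr, ← Finset.mul_sum]; ring
  have hpow : (∏ i, l i ^ ((d:ℝ)⁻¹)) ^ d = ∏ i, l i := by
    rw [← Finset.prod_pow]
    refine Finset.prod_congr rfl fun i _ => ?_
    rw [← Real.rpow_natCast (l i ^ ((d:ℝ)⁻¹)) d, ← Real.rpow_mul (hpos i).le,
      inv_mul_cancel₀ (by exact_mod_cast hd.ne'), Real.rpow_one]
  have hP : (0:ℝ) ≤ ∏ i, l i ^ ((d:ℝ)⁻¹) :=
    Finset.prod_nonneg fun i _ => Real.rpow_nonneg (hpos i).le _
  have hdle : A.det ≤ (A.trace / d) ^ d := by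
    rw [hdet, ← hpow, ← hsum]
    exact pow_le_pow_left₀ hP hgm d
  calc Real.log A.det ≤ Real.log ((A.trace / d) ^ d) := Real.log_le_log hA.det_pos hdle
    _ = d * Real.log (A.trace / d) := by rw [Real.log_pow]



end EPLaux2

/-- Cauchy–Schwarz combined with the elliptical potential lemma. -/
theorem sum_sqrt_elliptical_potential
    (d T : ℕ) (hd : 0 < d) (hT : 0 < T)
    (y : Fin T → Fin d → ℝ)
    (hy : ∀ t, Real.sqrt (∑ i, y t i ^ 2) ≤ 1)
    (U : ℕ → Matrix (Fin d) (Fin d) ℝ)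
    (hU0 : U 0 = 1)
    (hUsucc : ∀ t : Fin T, U ((t : ℕ) + 1) = U t + vecMulVec (y t) (y t)) :
    ∑ t : Fin T, Real.sqrt (y t ⬝ᵥ (U t)⁻¹ *ᵥ y t)
      ≤ Real.sqrt (2 * T * Real.log (U T).det) ∧
    Real.sqrt (2 * T * Real.log (U T).det)
      ≤ Real.sqrt (2 * d * T * Real.log (1 + (T : ℝ) / d)) := by
  classical
  set x : Fin T → ℝ := fun t => y t ⬝ᵥ (U t)⁻¹ *ᵥ y t with hxdef
  -- squared norms are at most 1
  have hy2 : ∀ t : Fin T, y t ⬝ᵥ y t ≤ 1 := by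
    intro t
    have h0 : 0 ≤ ∑ i, y t i ^ 2 := Finset.sum_nonneg fun i _ => sq_nonneg _
    have h1 : ∑ i, y t i ^ 2 ≤ 1 := by
      have := Real.mul_self_sqrt h0
      nlinarith [hy t, Real.sqrt_nonneg (∑ i, y t i ^ 2)]
    simpa [dotProduct, pow_two] using h1
  -- positive definiteness chain
  have key : ∀ n : ℕ, n ≤ T → (U n).PosDef ∧ ((U n) - 1).PosSemidef := by
    intro n
    induction n with
    | zero =>
      intro _
      rw [hU0]
      exact ⟨Matrix.PosDef.one, by simpa using Matrix.PosSemidef.zero⟩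
    | succ k ih =>
      intro hk
      have hkT : k < T := hk
      obtain ⟨h1, h2⟩ := ih hkT.le
      have hs := hUsucc ⟨k, hkT⟩
      rw [show (((⟨k, hkT⟩ : Fin T) : ℕ)) = k from rfl] at hs
      rw [hs]
      refine ⟨h1.add_posSemidef (EPLaux.posSemidef_outer _), ?_⟩
      have heq : U k + vecMulVec (y ⟨k, hkT⟩) (y ⟨k, hkT⟩) - 1
          = (U k - 1) + vecMulVec (y ⟨k, hkT⟩) (y ⟨k, hkT⟩) := by abel
      rw [heq]
      exact h2.add (EPLaux.posSemidef_outer _)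
  have hpd : ∀ t : Fin T, (U (t : ℕ)).PosDef := fun t => (key t t.2.le).1
  -- nonnegativity of the x's
  have hx0 : ∀ t : Fin T, 0 ≤ x t := by
    intro t
    have := ((hpd t).inv).posSemidef.dotProduct_mulVec_nonneg (y t)
    simpa [hxdef] using this
  -- U *ᵥ (U⁻¹ *ᵥ y) = y
  have hUy : ∀ t : Fin T, (U (t : ℕ)) *ᵥ ((U (t : ℕ))⁻¹ *ᵥ y t) = y t := by
    intro t
    rw [mulVec_mulVec, Matrix.mul_nonsing_inv _ (isUnit_iff_ne_zero.mpr (hpd t).det_pos.ne'),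
      one_mulVec]
  -- x t ≤ 1
  have hx1 : ∀ t : Fin T, x t ≤ 1 := by
    intro t
    set z : Fin d → ℝ := (U (t : ℕ))⁻¹ *ᵥ y t with hzdef
    have hzz : 0 ≤ z ⬝ᵥ z := Finset.sum_nonneg fun i _ => mul_self_nonneg _
    have hyy : 0 ≤ y t ⬝ᵥ y t := Finset.sum_nonneg fun i _ => mul_self_nonneg _
    have h3 : z ⬝ᵥ z ≤ z ⬝ᵥ y t := by
      have hps := (key t t.2.le).2.dotProduct_mulVec_nonneg z
      rw [star_trivial, sub_mulVec, dotProduct_sub, one_mulVec] at hps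
      have : z ⬝ᵥ (U (t : ℕ)) *ᵥ z = z ⬝ᵥ y t := by rw [hUy t]
      linarith [hps, this.ge, this.le]
    have hcs : (y t ⬝ᵥ z) ^ 2 ≤ (y t ⬝ᵥ y t) * (z ⬝ᵥ z) := by
      simpa [dotProduct, pow_two] using
        Finset.sum_mul_sq_le_sq_mul_sq Finset.univ (y t) z
    have h5 : z ⬝ᵥ y t = y t ⬝ᵥ z := dotProduct_comm _ _
    have hxz : x t = y t ⬝ᵥ z := rfl
    rw [hxz]
    nlinarith [hx0 t, hy2 t, hcs, h3, h5, hzz, hyy,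
      mul_le_of_le_one_left hzz (hy2 t)]
  -- determinant product formula
  set w : ℕ → ℝ := fun k => if h : k < T then x ⟨k, h⟩ else 0 with hwdef
  have hw0 : ∀ k, 0 ≤ w k := by
    intro k
    rw [hwdef]
    dsimp only
    split
    · exact hx0 _
    · exact le_rfl
  have hdetprod : ∀ n : ℕ, n ≤ T → (U n).det = ∏ k ∈ Finset.range n, (1 + w k) := by
    intro n
    induction n with
    | zero => intro _; rw [hU0]; simp
    | succ k ih =>
      intro hk
      have hkT : k < T := hk
      have hs := hUsucc ⟨k, hkT⟩
      rw [show (((⟨k, hkT⟩ : Fin T) : ℕ)) = k from rfl] at hs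
      rw [hs, EPLaux.det_add_outer (isUnit_iff_ne_zero.mpr (key k hkT.le).1.det_pos.ne') _,
        ih hkT.le, Finset.prod_range_succ]
      congr 1
      rw [hwdef]
      dsimp only
      rw [dif_pos hkT]
  have hlog : Real.log (U T).det = ∑ k ∈ Finset.range T, Real.log (1 + w k) := by
    rw [hdetprod T le_rfl]
    exact Real.log_prod fun k _ => by nlinarith [hw0 k]
  have hld0 : 0 ≤ Real.log (U T).det := by
    rw [hlog]
    exact Finset.sum_nonneg fun k _ => Real.log_nonneg (by linarith [hw0 k])
  -- convert range sum to Fin sum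
  have hlogFin : Real.log (U T).det = ∑ t : Fin T, Real.log (1 + x t) := by
    rw [hlog, ← Fin.sum_univ_eq_sum_range (fun k => Real.log (1 + w k)) T]
    refine Finset.sum_congr rfl fun t _ => ?_
    congr 1
    rw [hwdef]
    dsimp only
    rw [dif_pos t.2]
  -- sum of x's bounded by twice log det
  have hsum2 : ∑ t : Fin T, x t ≤ 2 * Real.log (U T).det := by
    rw [hlogFin, Finset.mul_sum]
    exact Finset.sum_le_sum fun t _ => EPLaux.half_le_log (hx0 t) (hx1 t)
  constructor
  · -- first inequality
    have hSnn : 0 ≤ ∑ t : Fin T, Real.sqrt (x t) :=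
      Finset.sum_nonneg fun t _ => Real.sqrt_nonneg _
    rw [Real.le_sqrt hSnn (by positivity)]
    have hcs2 : (∑ t : Fin T, Real.sqrt (x t)) ^ 2 ≤ T * ∑ t : Fin T, x t := by
      have h := sq_sum_le_card_mul_sum_sq
        (s := (Finset.univ : Finset (Fin T))) (f := fun t => Real.sqrt (x t))
      rw [Finset.card_univ, Fintype.card_fin] at h
      calc (∑ t : Fin T, Real.sqrt (x t)) ^ 2
          ≤ (T : ℝ) * ∑ t : Fin T, Real.sqrt (x t) ^ 2 := h
        _ = (T : ℝ) * ∑ t : Fin T, x t := by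
            congr 1
            exact Finset.sum_congr rfl fun t _ => Real.sq_sqrt (hx0 t)
    calc (∑ t : Fin T, Real.sqrt (x t)) ^ 2
        ≤ T * ∑ t : Fin T, x t := hcs2
      _ ≤ T * (2 * Real.log (U T).det) := by
          exact mul_le_mul_of_nonneg_left hsum2 (by positivity)
      _ = 2 * T * Real.log (U T).det := by ring
  · -- second inequality
    apply Real.sqrt_le_sqrt
    -- trace bound
    have htrout : ∀ t : Fin T, (vecMulVec (y t) (y t)).trace ≤ 1 := by
      intro t
      have : (vecMulVec (y t) (y t)).trace = y t ⬝ᵥ y t := by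
        simp [Matrix.trace, Matrix.diag, vecMulVec_apply, dotProduct]
      rw [this]
      exact hy2 t
    have htr : ∀ n : ℕ, n ≤ T → (U n).trace ≤ d + n := by
      intro n
      induction n with
      | zero => intro _; rw [hU0]; simp [Matrix.trace_one]
      | succ k ih =>
        intro hk
        have hkT : k < T := hk
        have hs := hUsucc ⟨k, hkT⟩
        rw [show (((⟨k, hkT⟩ : Fin T) : ℕ)) = k from rfl] at hs
        rw [hs, Matrix.trace_add]
        push_cast
        have := htrout ⟨k, hkT⟩
        have h2 := ih hkT.le
        push_cast at h2
        linarith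
    have htrpos : (0 : ℝ) < (U T).trace / d := by
      have h1 : ((U T) - 1).trace ≥ 0 := by
        have hps := (key T le_rfl).2
        have : ∀ i, 0 ≤ ((U T) - 1) i i := by
          intro i
          have := hps.dotProduct_mulVec_nonneg (Pi.single i 1)
          simpa [mulVec_single, dotProduct_single] using this
        exact Finset.sum_nonneg fun i _ => this i
      have h2 : (U T).trace ≥ d := by
        rw [Matrix.trace_sub, Matrix.trace_one] at h1
        simpa using h1
      have hdp : (0:ℝ) < d := by exact_mod_cast hd
      exact div_pos (by linarith) hdp
    have hfrac : (U T).trace / d ≤ 1 + (T : ℝ) / d := by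
      have hdpos : (0:ℝ) < d := by exact_mod_cast hd
      have heq : ((d:ℝ) + T) / d = 1 + (T:ℝ) / d := by field_simp
      rw [← heq]
      have h := htr T le_rfl
      gcongr
    have hld : Real.log (U T).det ≤ d * Real.log (1 + (T : ℝ) / d) := by
      calc Real.log (U T).det ≤ d * Real.log ((U T).trace / d) :=
            EPLaux2.logdet_le hd (key T le_rfl).1
        _ ≤ d * Real.log (1 + (T : ℝ) / d) := by
            have := Real.log_le_log htrpos hfrac
            have hd0 : (0:ℝ) ≤ d := by positivity
            nlinarith
    nlinarith [hld, hld0, (show (0:ℝ) ≤ T by positivity)]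
end

section
/- Let n, d be positive integers, X an n×d real matrix, θ ∈ ℝ^d with ‖θ‖₂ ≤ 1, and Ξ ∈ ℝ^n. Define Λ = XᵀX + I_d and θ̂ = Λ^{-1}Xᵀ(Xθ + Ξ). Then ‖θ̂ − θ‖_Λ² ≤ ‖θ̂ − θ‖_Λ + (θ̂ − θ)ᵀXᵀΞ. -/
open Matrix BigOperators

/-- Basic inequality for the ridge estimation error in the `Λ`-norm:
`‖θ̂ − θ‖_Λ² ≤ ‖θ̂ − θ‖_Λ + (θ̂ − θ)ᵀXᵀΞ`. -/
theorem ridge_basic_inequality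
    (n d : ℕ) (hn : 0 < n) (hd : 0 < d)
    (X : Matrix (Fin n) (Fin d) ℝ) (θ : Fin d → ℝ)
    (hθ : Real.sqrt (∑ i, θ i ^ 2) ≤ 1) (Ξ : Fin n → ℝ)
    (Λ : Matrix (Fin d) (Fin d) ℝ) (hΛ : Λ = Xᵀ * X + 1)
    (θhat : Fin d → ℝ) (hθhat : θhat = Λ⁻¹ *ᵥ (Xᵀ *ᵥ (X *ᵥ θ + Ξ))) :
    (θhat - θ) ⬝ᵥ Λ *ᵥ (θhat - θ)
      ≤ Real.sqrt ((θhat - θ) ⬝ᵥ Λ *ᵥ (θhat - θ)) + (θhat - θ) ⬝ᵥ (Xᵀ *ᵥ Ξ) := by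
  set v : Fin d → ℝ := θhat - θ with hv
  have hXtX : (Xᵀ * X).PosSemidef := by
    have := Matrix.posSemidef_conjTranspose_mul_self X
    rwa [Matrix.conjTranspose_eq_transpose_of_trivial] at this
  have hpd : Λ.PosDef := by
    rw [hΛ]
    exact Matrix.PosDef.posSemidef_add hXtX Matrix.PosDef.one
  have hinv : Λ * Λ⁻¹ = 1 := Matrix.mul_nonsing_inv _ (Matrix.isUnit_iff_isUnit_det _ |>.1 hpd.isUnit)
  -- key identity: Λ v = Xᵀ Ξ - θ
  have hkey : Λ *ᵥ v = Xᵀ *ᵥ Ξ - θ := by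
    have h1 : Λ *ᵥ θhat = Xᵀ *ᵥ (X *ᵥ θ) + Xᵀ *ᵥ Ξ := by
      rw [hθhat, Matrix.mulVec_mulVec, hinv, Matrix.one_mulVec, Matrix.mulVec_add]
    have h2 : Λ *ᵥ θ = Xᵀ *ᵥ (X *ᵥ θ) + θ := by
      rw [hΛ, Matrix.add_mulVec, Matrix.one_mulVec, ← Matrix.mulVec_mulVec]
    rw [hv, Matrix.mulVec_sub, h1, h2]
    abel
  have hQ : v ⬝ᵥ Λ *ᵥ v = v ⬝ᵥ (Xᵀ *ᵥ Ξ) - v ⬝ᵥ θ := by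
    rw [hkey, dotProduct_sub]
  -- v ⬝ᵥ v ≤ Q
  have hvvQ : v ⬝ᵥ v ≤ v ⬝ᵥ Λ *ᵥ v := by
    have : v ⬝ᵥ Λ *ᵥ v = v ⬝ᵥ (Xᵀ * X) *ᵥ v + v ⬝ᵥ v := by
      rw [hΛ, Matrix.add_mulVec, dotProduct_add, Matrix.one_mulVec]
    rw [this]
    have h0 : 0 ≤ v ⬝ᵥ (Xᵀ * X) *ᵥ v := by
      simpa using hXtX.dotProduct_mulVec_nonneg v
    linarith
  have hQ0 : 0 ≤ v ⬝ᵥ Λ *ᵥ v := le_trans (by simpa [dotProduct] using Finset.sum_nonneg fun i (_ : i ∈ Finset.univ) => mul_self_nonneg (v i)) hvvQ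
  -- Cauchy-Schwarz: |v ⬝ᵥ θ| ≤ √(v⬝v) √(θ⬝θ) ≤ √Q
  have hcs : -(v ⬝ᵥ θ) ≤ Real.sqrt (v ⬝ᵥ Λ *ᵥ v) := by
    have h1 : (v ⬝ᵥ θ) ^ 2 ≤ (∑ i, v i ^ 2) * (∑ i, θ i ^ 2) := by
      simpa [dotProduct] using Finset.sum_mul_sq_le_sq_mul_sq Finset.univ v θ
    have hθnn : (0:ℝ) ≤ ∑ i, θ i ^ 2 := Finset.sum_nonneg fun i _ => sq_nonneg _
    have hθ2 : (∑ i, θ i ^ 2) ≤ 1 := by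
      nlinarith [Real.sq_sqrt hθnn, Real.sqrt_nonneg (∑ i, θ i ^ 2)]
    have hvv : (∑ i, v i ^ 2) = v ⬝ᵥ v := by simp [dotProduct, sq]
    have h2 : (v ⬝ᵥ θ) ^ 2 ≤ v ⬝ᵥ Λ *ᵥ v := by
      calc (v ⬝ᵥ θ) ^ 2 ≤ (∑ i, v i ^ 2) * (∑ i, θ i ^ 2) := h1
        _ ≤ (∑ i, v i ^ 2) * 1 := by
            apply mul_le_mul_of_nonneg_left hθ2 (Finset.sum_nonneg fun i _ => sq_nonneg (v i))
        _ = v ⬝ᵥ v := by rw [mul_one, hvv]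
        _ ≤ v ⬝ᵥ Λ *ᵥ v := hvvQ
    have habs : |v ⬝ᵥ θ| ≤ Real.sqrt (v ⬝ᵥ Λ *ᵥ v) := by
      rw [← Real.sqrt_sq_eq_abs]
      exact Real.sqrt_le_sqrt h2
    linarith [neg_abs_le (v ⬝ᵥ θ)]
  have hdiff : v ⬝ᵥ Λ *ᵥ v - v ⬝ᵥ (Xᵀ *ᵥ Ξ) = -(v ⬝ᵥ θ) := by rw [hQ]; ring
  linarith
end

section
/- There exists a universal constant C > 0 with the following property. Let n, d be positive integers, x_1, ..., x_n ∈ ℝ^d fixed vectors, θ ∈ ℝ^d with ‖θ‖₂ ≤ 1, and ξ_1, ..., ξ_n independent real random variables each centered sub-Gaussian with variance proxy 1. Define Λ = I_d + ∑_{i=1}^{n} x_i x_iᵀ and θ̂ = Λ^{-1} ∑_{i=1}^{n} (⟨x_i, θ⟩ + ξ_i) x_i. Then for every δ ∈ (0, 1/2], with probability at least 1 − δ it holds that |⟨x, θ̂ − θ⟩| ≤ C (√d + √(ln(1/δ))) · √(xᵀΛ^{-1}x) simultaneously for all x ∈ ℝ^d. -/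
open Matrix MeasureTheory ProbabilityTheory BigOperators

open Metric Set Real
open scoped ENNReal NNReal

lemma my_separated_card_le
    {E : Type} [NormedAddCommGroup E] [NormedSpace ℝ E] [FiniteDimensional ℝ E]
    (s : Finset E) (hs : ∀ z ∈ s, ‖z‖ ≤ 1)
    (hsep : ∀ a ∈ s, ∀ b ∈ s, a ≠ b → 1/2 ≤ dist a b) :
    s.card ≤ 5 ^ (Module.finrank ℝ E) := by
  letI : MeasurableSpace E := borel E
  haveI : BorelSpace E := ⟨rfl⟩
  set D := Module.finrank ℝ E with hD
  let μ : Measure E := Measure.addHaar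
  have hdisj : (↑s : Set E).Pairwise (Function.onFun Disjoint fun z => ball z (4⁻¹ : ℝ)) := by
    intro a ha b hb hab
    refine Set.disjoint_left.2 fun p hpa hpb => ?_
    have h1 : dist p a < 4⁻¹ := mem_ball.mp hpa
    have h2 : dist p b < 4⁻¹ := mem_ball.mp hpb
    have : dist a b < 1/2 := by
      calc dist a b ≤ dist a p + dist p b := dist_triangle _ _ _
        _ < 4⁻¹ + 4⁻¹ := by rw [dist_comm a p]; exact add_lt_add h1 h2
        _ = 1/2 := by norm_num
    linarith [hsep a ha b hb hab]
  have hsub : (⋃ z ∈ s, ball z (4⁻¹ : ℝ)) ⊆ ball (0 : E) (5/4) := by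
    intro p hp
    simp only [mem_iUnion] at hp
    obtain ⟨z, hz, hpz⟩ := hp
    have h1 : dist p z < 4⁻¹ := mem_ball.mp hpz
    have h2 : ‖z‖ ≤ 1 := hs z hz
    have : dist p 0 < 5/4 := by
      calc dist p 0 ≤ dist p z + dist z 0 := dist_triangle _ _ _
        _ < 4⁻¹ + 1 := by rw [dist_zero_right]; exact add_lt_add_of_lt_of_le h1 h2
        _ = 5/4 := by norm_num
    exact mem_ball.mpr this
  have hsum : μ (⋃ z ∈ s, ball z (4⁻¹ : ℝ)) = ∑ z ∈ s, μ (ball z (4⁻¹ : ℝ)) :=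
    measure_biUnion_finset hdisj (fun z _ => measurableSet_ball)
  have hball : ∀ z : E, μ (ball z (4⁻¹ : ℝ)) = ENNReal.ofReal ((4⁻¹ : ℝ) ^ D) * μ (ball 0 1) :=
    fun z => Measure.addHaar_ball_of_pos μ z (by norm_num)
  have hbig : μ (ball (0 : E) (5/4)) = ENNReal.ofReal ((5/4 : ℝ) ^ D) * μ (ball 0 1) :=
    Measure.addHaar_ball_of_pos μ 0 (by norm_num)
  have hle : ((s.card : ℝ≥0∞) * ENNReal.ofReal ((4⁻¹ : ℝ) ^ D)) * μ (ball 0 1)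
      ≤ ENNReal.ofReal ((5/4 : ℝ) ^ D) * μ (ball 0 1) := by
    calc ((s.card : ℝ≥0∞) * ENNReal.ofReal ((4⁻¹ : ℝ) ^ D)) * μ (ball 0 1)
        = ∑ z ∈ s, μ (ball z (4⁻¹ : ℝ)) := by
          rw [Finset.sum_congr rfl fun z _ => hball z, Finset.sum_const, nsmul_eq_mul, mul_assoc]
      _ = μ (⋃ z ∈ s, ball z (4⁻¹ : ℝ)) := hsum.symm
      _ ≤ μ (ball (0 : E) (5/4)) := measure_mono hsub
      _ = _ := hbig
  have hpos : μ (ball (0 : E) 1) ≠ 0 := (measure_ball_pos μ 0 one_pos).ne'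
  have hfin : μ (ball (0 : E) 1) ≠ ⊤ := measure_ball_lt_top.ne
  have hle2 : (s.card : ℝ≥0∞) * ENNReal.ofReal ((4⁻¹ : ℝ) ^ D) ≤ ENNReal.ofReal ((5/4 : ℝ) ^ D) :=
by
    have := ENNReal.mul_le_mul_iff_left hpos hfin (a := (s.card : ℝ≥0∞) * ENNReal.ofReal ((4⁻¹ : ℝ) ^ D)) (b := ENNReal.ofReal ((5/4 : ℝ) ^ D))
    exact this.mp hle
  -- convert to reals
  have h4 : (0:ℝ) < (4⁻¹ : ℝ) ^ D := by positivity
  have hr : (s.card : ℝ) * (4⁻¹ : ℝ) ^ D ≤ (5/4 : ℝ) ^ D := by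
    have := hle2
    rw [← ENNReal.ofReal_natCast, ← ENNReal.ofReal_mul (by positivity)] at this
    exact (ENNReal.ofReal_le_ofReal_iff (by positivity)).mp this
  have hfinal : (s.card : ℝ) ≤ (5:ℝ) ^ D := by
    have h5 : ((5:ℝ)/4) ^ D = 5 ^ D * (4⁻¹:ℝ) ^ D := by
      rw [← mul_pow]; norm_num
    rw [h5] at hr
    exact le_of_mul_le_mul_right (by linarith) h4
  have : ((5:ℝ)) ^ D = ((5 ^ D : ℕ) : ℝ) := by push_cast; ring
  rw [this] at hfinal
  exact_mod_cast hfinal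

lemma my_exists_net
    (E : Type) [NormedAddCommGroup E] [NormedSpace ℝ E] [FiniteDimensional ℝ E] :
    ∃ N : Finset E, N.card ≤ 5 ^ (Module.finrank ℝ E) ∧ (∀ z ∈ N, ‖z‖ ≤ 1) ∧
      ∀ z : E, ‖z‖ ≤ 1 → ∃ z₀ ∈ N, ‖z - z₀‖ ≤ 1/2 := by
  classical
  set D := Module.finrank ℝ E
  set Good : Finset E → Prop := fun N =>
    (∀ z ∈ N, ‖z‖ ≤ 1) ∧ ∀ a ∈ N, ∀ b ∈ N, a ≠ b → 1/2 ≤ dist a b with hGood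
  set S : Set ℕ := {m | ∃ N : Finset E, Good N ∧ N.card = m} with hS
  have hSne : S.Nonempty := ⟨0, ∅, ⟨fun z hz => absurd hz (Finset.notMem_empty z),
    fun a ha => absurd ha (Finset.notMem_empty a)⟩, rfl⟩
  have hbdd : BddAbove S := by
    refine ⟨5 ^ D, fun m hm => ?_⟩
    obtain ⟨N, hN, rfl⟩ := hm
    exact my_separated_card_le N hN.1 hN.2
  obtain ⟨N, hN, hcard⟩ := Nat.sSup_mem hSne hbdd
  refine ⟨N, ?_, hN.1, ?_⟩
  · exact hcard ▸ csSup_le hSne (fun m hm => by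
      obtain ⟨M, hM, rfl⟩ := hm; exact my_separated_card_le M hM.1 hM.2) |>.trans le_rfl
  · intro z hz
    by_contra hcon
    push_neg at hcon
    have hznotin : z ∉ N := fun hmem => by
      have := hcon z hmem
      simp at this
      linarith
    have hGood' : Good (insert z N) := by
      constructor
      · intro w hw
        rcases Finset.mem_insert.mp hw with h | h
        · exact h ▸ hz
        · exact hN.1 w h
      · intro a ha b hb hab
        rcases Finset.mem_insert.mp ha with h | h <;>
          rcases Finset.mem_insert.mp hb with h' | h'
        · exact absurd (h.trans h'.symm) hab
        · subst h
          have := hcon b h'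
          rw [dist_eq_norm]
          linarith
        · subst h'
          have := hcon a h
          rw [dist_comm, dist_eq_norm]
          linarith
        · exact hN.2 a h b h' hab
    have hmem : (insert z N).card ∈ S := ⟨insert z N, hGood', rfl⟩
    have := le_csSup hbdd hmem
    rw [Finset.card_insert_of_notMem hznotin, hcard] at this
    omega

/-- Type synonym to carry the `Λ`-norm without instance clashes. -/
def Pd (d : ℕ) : Type := Fin d → ℝ

lemma my_matrix_net {d : ℕ} {Λ : Matrix (Fin d) (Fin d) ℝ} (hΛ : Λ.PosDef) :
    ∃ N : Finset (Fin d → ℝ), N.card ≤ 5 ^ d ∧ (∀ z ∈ N, z ⬝ᵥ (Λ *ᵥ z) ≤ 1) ∧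
      ∀ z : Fin d → ℝ, z ⬝ᵥ (Λ *ᵥ z) ≤ 1 →
        ∃ z₀ ∈ N, (z - z₀) ⬝ᵥ (Λ *ᵥ (z - z₀)) ≤ 1/4 := by
  letI nacg : NormedAddCommGroup (Pd d) := Matrix.toNormedAddCommGroup Λ hΛ
  letI ips : InnerProductSpace ℝ (Pd d) := Matrix.toInnerProductSpace Λ hΛ.posSemidef
  haveI hfd : FiniteDimensional ℝ (Pd d) :=
    Module.Finite.of_basis (Pi.basisFun ℝ (Fin d))
  have hinner : ∀ w : Pd d, (inner ℝ w w : ℝ) = (w : Fin d → ℝ) ⬝ᵥ (Λ *ᵥ (w : Fin d → ℝ)) :=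
    fun w => by
      change (Λ *ᵥ (w : Fin d → ℝ)) ⬝ᵥ star (w : Fin d → ℝ) = _
      exact dotProduct_comm _ _
  have hnorm : ∀ w : Pd d, ‖w‖ = Real.sqrt ((w : Fin d → ℝ) ⬝ᵥ (Λ *ᵥ (w : Fin d → ℝ))) := by
    intro w
    rw [@norm_eq_sqrt_real_inner (Pd d) _ (by exact ips) w, hinner]
  have hfr : Module.finrank ℝ (Pd d) = d := Module.finrank_fin_fun ℝ
  obtain ⟨N, hcard, hball, hnet⟩ := my_exists_net (Pd d)
  refine ⟨N, by rwa [hfr] at hcard, ?_, ?_⟩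
  · intro z hz
    have hle := hball z hz
    rw [hnorm z] at hle
    have h0 : 0 ≤ z ⬝ᵥ (Λ *ᵥ z) := by
      have := hΛ.posSemidef.dotProduct_mulVec_nonneg z; rwa [star_trivial] at this
    nlinarith [Real.sq_sqrt h0, Real.sqrt_nonneg (z ⬝ᵥ (Λ *ᵥ z))]
  · intro z hz
    have hz' := (hnorm z).trans_le (by
      calc Real.sqrt (z ⬝ᵥ (Λ *ᵥ z)) ≤ Real.sqrt 1 := Real.sqrt_le_sqrt hz
        _ = 1 := Real.sqrt_one)
    obtain ⟨z₀, hz₀, hd⟩ := hnet z hz'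
    rw [hnorm _] at hd
    refine ⟨z₀, hz₀, ?_⟩
    have key : (Sub.sub (α := Pd d) z z₀) ⬝ᵥ (Λ *ᵥ (Sub.sub (α := Pd d) z z₀)) ≤ 1/4 := by
      have h0 : 0 ≤ (Sub.sub (α := Pd d) z z₀) ⬝ᵥ (Λ *ᵥ (Sub.sub (α := Pd d) z z₀)) :=
        by have := hΛ.posSemidef.dotProduct_mulVec_nonneg (Sub.sub (α := Pd d) z z₀); exact this
      have hd' : Real.sqrt ((Sub.sub (α := Pd d) z z₀) ⬝ᵥ (Λ *ᵥ (Sub.sub (α := Pd d) z z₀)))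
          ≤ 1/2 := hd
      nlinarith [Real.sq_sqrt h0,
        Real.sqrt_nonneg ((Sub.sub (α := Pd d) z z₀) ⬝ᵥ (Λ *ᵥ (Sub.sub (α := Pd d) z z₀)))]
    exact key

lemma my_dot_symm {d : ℕ} {B : Matrix (Fin d) (Fin d) ℝ} (hB : Bᵀ = B) (a b : Fin d → ℝ) :
    a ⬝ᵥ (B *ᵥ b) = b ⬝ᵥ (B *ᵥ a) := by
  calc a ⬝ᵥ (B *ᵥ b) = (B *ᵥ b) ⬝ᵥ a := dotProduct_comm _ _
    _ = (b ᵥ* Bᵀ) ⬝ᵥ a := by rw [Matrix.vecMul_transpose]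
    _ = (b ᵥ* B) ⬝ᵥ a := by rw [hB]
    _ = b ⬝ᵥ (B *ᵥ a) := by rw [Matrix.dotProduct_mulVec]

lemma my_transpose_eq {d : ℕ} {B : Matrix (Fin d) (Fin d) ℝ} (hB : B.IsHermitian) : Bᵀ = B := by
  ext i j
  have := congrFun (congrFun hB i) j
  simpa [Matrix.conjTranspose_apply] using this

lemma my_psd_cs {d : ℕ} {B : Matrix (Fin d) (Fin d) ℝ} (hB : B.PosSemidef) (a b : Fin d → ℝ) :
    (a ⬝ᵥ (B *ᵥ b))^2 ≤ (a ⬝ᵥ (B *ᵥ a)) * (b ⬝ᵥ (B *ᵥ b)) := by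
  have hBt : Bᵀ = B := my_transpose_eq hB.1
  have key : ∀ r : ℝ, 0 ≤ (b ⬝ᵥ (B *ᵥ b)) * (r*r) + (2 * (a ⬝ᵥ (B *ᵥ b))) * r
      + (a ⬝ᵥ (B *ᵥ a)) := by
    intro r
    have h := hB.dotProduct_mulVec_nonneg (a + r • b)
    have hst : star (a + r • b) = a + r • b := by simp
    rw [hst] at h
    have expand : (a + r • b) ⬝ᵥ (B *ᵥ (a + r • b))
        = (b ⬝ᵥ (B *ᵥ b)) * (r*r) + (2 * (a ⬝ᵥ (B *ᵥ b))) * r + (a ⬝ᵥ (B *ᵥ a)) := by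
      rw [Matrix.mulVec_add, Matrix.mulVec_smul, add_dotProduct, smul_dotProduct,
        dotProduct_add, dotProduct_add, dotProduct_smul, dotProduct_smul,
        my_dot_symm hBt b a]
      simp only [smul_eq_mul]
      ring
    linarith [expand ▸ h]
  have hd := discrim_le_zero key
  rw [discrim] at hd
  nlinarith [hd]

lemma my_psd_cs_abs {d : ℕ} {B : Matrix (Fin d) (Fin d) ℝ} (hB : B.PosSemidef) (a b : Fin d → ℝ) :
    |a ⬝ᵥ (B *ᵥ b)| ≤ Real.sqrt (a ⬝ᵥ (B *ᵥ a)) * Real.sqrt (b ⬝ᵥ (B *ᵥ b)) := by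
  have h0a : 0 ≤ a ⬝ᵥ (B *ᵥ a) := by simpa using hB.dotProduct_mulVec_nonneg a
  have h0b : 0 ≤ b ⬝ᵥ (B *ᵥ b) := by simpa using hB.dotProduct_mulVec_nonneg b
  have hcs := my_psd_cs hB a b
  have hra := Real.sq_sqrt h0a
  have hrb := Real.sq_sqrt h0b
  have hna := Real.sqrt_nonneg (a ⬝ᵥ (B *ᵥ a))
  have hnb := Real.sqrt_nonneg (b ⬝ᵥ (B *ᵥ b))
  calc |a ⬝ᵥ (B *ᵥ b)| = Real.sqrt ((a ⬝ᵥ (B *ᵥ b))^2) := (Real.sqrt_sq_eq_abs _).symm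
    _ ≤ Real.sqrt ((a ⬝ᵥ (B *ᵥ a)) * (b ⬝ᵥ (B *ᵥ b))) := Real.sqrt_le_sqrt hcs
    _ = _ := Real.sqrt_mul h0a _

lemma my_psd_sqrt_triangle {d : ℕ} {B : Matrix (Fin d) (Fin d) ℝ} (hB : B.PosSemidef)
    (a b : Fin d → ℝ) :
    Real.sqrt ((a + b) ⬝ᵥ (B *ᵥ (a + b)))
      ≤ Real.sqrt (a ⬝ᵥ (B *ᵥ a)) + Real.sqrt (b ⬝ᵥ (B *ᵥ b)) := by
  have h0a : 0 ≤ a ⬝ᵥ (B *ᵥ a) := by simpa using hB.dotProduct_mulVec_nonneg a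
  have h0b : 0 ≤ b ⬝ᵥ (B *ᵥ b) := by simpa using hB.dotProduct_mulVec_nonneg b
  have hBt : Bᵀ = B := my_transpose_eq hB.1
  have habs := my_psd_cs_abs hB a b
  have hra := Real.sq_sqrt h0a
  have hrb := Real.sq_sqrt h0b
  have hna := Real.sqrt_nonneg (a ⬝ᵥ (B *ᵥ a))
  have hnb := Real.sqrt_nonneg (b ⬝ᵥ (B *ᵥ b))
  have expand : (a + b) ⬝ᵥ (B *ᵥ (a + b))
      = (a ⬝ᵥ (B *ᵥ a)) + 2 * (a ⬝ᵥ (B *ᵥ b)) + (b ⬝ᵥ (B *ᵥ b)) := by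
    rw [Matrix.mulVec_add, add_dotProduct, dotProduct_add, dotProduct_add,
      my_dot_symm hBt b a]
    ring
  have hle : (a + b) ⬝ᵥ (B *ᵥ (a + b))
      ≤ (Real.sqrt (a ⬝ᵥ (B *ᵥ a)) + Real.sqrt (b ⬝ᵥ (B *ᵥ b)))^2 := by
    rw [expand]
    have := (abs_le.mp habs).2
    nlinarith
  calc Real.sqrt ((a + b) ⬝ᵥ (B *ᵥ (a + b)))
      ≤ Real.sqrt ((Real.sqrt (a ⬝ᵥ (B *ᵥ a)) + Real.sqrt (b ⬝ᵥ (B *ᵥ b)))^2) :=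
        Real.sqrt_le_sqrt hle
    _ = _ := Real.sqrt_sq (by positivity)

lemma my_vecMulVec_mulVec {n : ℕ} (a b v : Fin n → ℝ) :
    vecMulVec a b *ᵥ v = (b ⬝ᵥ v) • a := by
  ext j
  simp [vecMulVec_apply, Matrix.mulVec, dotProduct, Finset.mul_sum, Pi.smul_apply,
    smul_eq_mul, mul_assoc, mul_comm, mul_left_comm]

lemma my_sum_mulVec {ι : Type*} (s : Finset ι) {d : ℕ} (A : ι → Matrix (Fin d) (Fin d) ℝ)
    (v : Fin d → ℝ) : (∑ i ∈ s, A i) *ᵥ v = ∑ i ∈ s, (A i *ᵥ v) := by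
  ext j
  simp only [Matrix.mulVec, dotProduct, Matrix.sum_apply, Finset.sum_apply, Finset.sum_mul]
  rw [Finset.sum_comm]

lemma my_dotProduct_sum {ι : Type*} (s : Finset ι) {d : ℕ} (v : Fin d → ℝ)
    (u : ι → Fin d → ℝ) : v ⬝ᵥ (∑ i ∈ s, u i) = ∑ i ∈ s, v ⬝ᵥ u i := by
  simp only [dotProduct, Finset.sum_apply, Finset.mul_sum]
  rw [Finset.sum_comm]

lemma my_M_psd {n d : ℕ} (x : Fin n → Fin d → ℝ) :
    (∑ i : Fin n, vecMulVec (x i) (x i)).PosSemidef := by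
  refine Matrix.PosSemidef.of_dotProduct_mulVec_nonneg ?_ ?_
  · show _ = _
    rw [conjTranspose_eq_transpose_of_trivial]
    rw [transpose_sum]
    refine Finset.sum_congr rfl fun i _ => ?_
    ext a b
    simp [vecMulVec_apply, mul_comm]
  · intro v
    rw [star_trivial, my_sum_mulVec, my_dotProduct_sum]
    refine Finset.sum_nonneg fun i _ => ?_
    rw [my_vecMulVec_mulVec, dotProduct_smul, smul_eq_mul, dotProduct_comm v (x i)]
    exact mul_self_nonneg _

lemma my_det_core {n d : ℕ} (x : Fin n → Fin d → ℝ) (θ : Fin d → ℝ)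
    (hθ : ∑ j, θ j ^ 2 ≤ 1) (e : Fin n → ℝ) (N : Finset (Fin d → ℝ)) (t : ℝ) (ht : 0 ≤ t)
    (hnet : ∀ z : Fin d → ℝ, z ⬝ᵥ ((1 + ∑ i : Fin n, vecMulVec (x i) (x i)) *ᵥ z) ≤ 1 →
      ∃ z₀ ∈ N, (z - z₀) ⬝ᵥ ((1 + ∑ i : Fin n, vecMulVec (x i) (x i)) *ᵥ (z - z₀)) ≤ 1/4)
    (hbound : ∀ z ∈ N, |z ⬝ᵥ (∑ i : Fin n, e i • x i)| ≤ t) :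
    ∀ y : Fin d → ℝ,
      |y ⬝ᵥ (((1 + ∑ i : Fin n, vecMulVec (x i) (x i))⁻¹
          *ᵥ (∑ i : Fin n, (x i ⬝ᵥ θ + e i) • x i)) - θ)|
        ≤ (1 + 2*t) * Real.sqrt (y ⬝ᵥ (1 + ∑ i : Fin n, vecMulVec (x i) (x i))⁻¹ *ᵥ y) := by
  set M : Matrix (Fin d) (Fin d) ℝ := ∑ i : Fin n, vecMulVec (x i) (x i) with hM
  set Λ : Matrix (Fin d) (Fin d) ℝ := 1 + M with hΛdef
  set B : Matrix (Fin d) (Fin d) ℝ := Λ⁻¹ with hBdef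
  set S : Fin d → ℝ := ∑ i : Fin n, e i • x i with hSdef
  have hMpsd : M.PosSemidef := my_M_psd x
  have hΛpd : Λ.PosDef := Matrix.PosDef.one.add_posSemidef hMpsd
  have hBpd : B.PosDef := hΛpd.inv
  have hBpsd : B.PosSemidef := hBpd.posSemidef
  have hΛpsd : Λ.PosSemidef := hΛpd.posSemidef
  have hunit : IsUnit Λ.det := isUnit_iff_ne_zero.2 hΛpd.det_pos.ne'
  have hBΛ : B * Λ = 1 := Matrix.nonsing_inv_mul Λ hunit
  have hΛB : Λ * B = 1 := Matrix.mul_nonsing_inv Λ hunit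
  -- quadratic forms are nonneg
  have hqB : ∀ v : Fin d → ℝ, 0 ≤ v ⬝ᵥ (B *ᵥ v) := fun v => by simpa using hBpsd.dotProduct_mulVec_nonneg v
  have hqΛ : ∀ v : Fin d → ℝ, 0 ≤ v ⬝ᵥ (Λ *ᵥ v) := fun v => by simpa using hΛpsd.dotProduct_mulVec_nonneg v
  -- step (6) : rewrite the estimator difference
  have hsum : (∑ i : Fin n, (x i ⬝ᵥ θ + e i) • x i) = M *ᵥ θ + S := by
    rw [hSdef, hM, my_sum_mulVec, ← Finset.sum_add_distrib]
    refine Finset.sum_congr rfl fun i _ => ?_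
    rw [my_vecMulVec_mulVec, add_smul]
  have hrw : (B *ᵥ (∑ i : Fin n, (x i ⬝ᵥ θ + e i) • x i)) - θ = B *ᵥ (S - θ) := by
    have hMθ : M *ᵥ θ = Λ *ᵥ θ - θ := by
      rw [hΛdef, add_mulVec, one_mulVec]; abel
    rw [hsum, hMθ, mulVec_add, mulVec_sub, mulVec_sub, mulVec_mulVec, hBΛ, one_mulVec]
    abel
  -- step (7) : θᵀ B θ ≤ 1
  have hθB : θ ⬝ᵥ (B *ᵥ θ) ≤ 1 := by
    set b : Fin d → ℝ := B *ᵥ θ with hb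
    have hθeq : Λ *ᵥ b = θ := by rw [hb, mulVec_mulVec, hΛB, one_mulVec]
    have h1 : θ ⬝ᵥ b = b ⬝ᵥ b + b ⬝ᵥ (M *ᵥ b) := by
      calc θ ⬝ᵥ b = (Λ *ᵥ b) ⬝ᵥ b := by rw [hθeq]
        _ = b ⬝ᵥ (Λ *ᵥ b) := dotProduct_comm _ _
        _ = b ⬝ᵥ b + b ⬝ᵥ (M *ᵥ b) := by rw [hΛdef, add_mulVec, one_mulVec, dotProduct_add]
    have h2 : 0 ≤ b ⬝ᵥ (M *ᵥ b) := by simpa using hMpsd.dotProduct_mulVec_nonneg b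
    have h3 : (θ ⬝ᵥ b)^2 ≤ (∑ j, θ j ^ 2) * (b ⬝ᵥ b) := by
      have := Finset.sum_mul_sq_le_sq_mul_sq Finset.univ θ b
      have hθb : θ ⬝ᵥ b = ∑ j, θ j * b j := rfl
      have hbb : b ⬝ᵥ b = ∑ j, b j ^ 2 := by
        simp [dotProduct, pow_two]
      rw [hθb, hbb]
      simpa [pow_two] using this
    have hbb0 : 0 ≤ b ⬝ᵥ b := by
      have : b ⬝ᵥ b = ∑ j, b j ^ 2 := by simp [dotProduct, pow_two]
      rw [this]; positivity
    nlinarith [h1, h2, h3, hbb0]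
  -- step (8) : √(SᵀBS) ≤ 2t
  set q : ℝ := S ⬝ᵥ (B *ᵥ S) with hq
  have hq0 : 0 ≤ q := hqB S
  have hβle : Real.sqrt q ≤ 2*t := by
    rcases eq_or_lt_of_le hq0 with h0 | hpos
    · rw [← h0, Real.sqrt_zero]; linarith
    · set β : ℝ := Real.sqrt q with hβ
      have hβpos : 0 < β := Real.sqrt_pos.2 hpos
      have hβsq : β^2 = q := Real.sq_sqrt hq0
      set w : Fin d → ℝ := B *ᵥ S with hw
      have hΛw : Λ *ᵥ w = S := by rw [hw, mulVec_mulVec, hΛB, one_mulVec]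
      have hwS : w ⬝ᵥ S = q := by
        rw [hq, hw]; exact dotProduct_comm _ _
      have hwΛw : w ⬝ᵥ (Λ *ᵥ w) = q := by rw [hΛw, hwS]
      set z : Fin d → ℝ := β⁻¹ • w with hz
      have hzΛz : z ⬝ᵥ (Λ *ᵥ z) = 1 := by
        rw [hz, mulVec_smul, smul_dotProduct, dotProduct_smul, hwΛw, smul_eq_mul, smul_eq_mul]
        rw [← hβsq]
        field_simp
      obtain ⟨z₀, hz₀N, hz₀⟩ := hnet z (le_of_eq hzΛz)
      have hzS : z ⬝ᵥ S = β := by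
        rw [hz, smul_dotProduct, hwS, smul_eq_mul]
        rw [← hβsq]
        field_simp
      have hzz₀S : |(z - z₀) ⬝ᵥ S| ≤ (1/2) * β := by
        have hcs : |(z - z₀) ⬝ᵥ (Λ *ᵥ w)| ≤ Real.sqrt ((z - z₀) ⬝ᵥ (Λ *ᵥ (z - z₀)))
            * Real.sqrt (w ⬝ᵥ (Λ *ᵥ w)) := my_psd_cs_abs hΛpsd _ _
        rw [hwΛw, hΛw] at hcs
        have h14 : Real.sqrt ((z - z₀) ⬝ᵥ (Λ *ᵥ (z - z₀))) ≤ 1/2 := by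
          calc Real.sqrt ((z - z₀) ⬝ᵥ (Λ *ᵥ (z - z₀))) ≤ Real.sqrt (1/4) :=
                Real.sqrt_le_sqrt hz₀
            _ = 1/2 := by
                rw [show (1/4 : ℝ) = (1/2)^2 by norm_num, Real.sqrt_sq (by norm_num)]
        calc |(z - z₀) ⬝ᵥ S| ≤ Real.sqrt ((z - z₀) ⬝ᵥ (Λ *ᵥ (z - z₀))) * Real.sqrt q := hcs
          _ ≤ (1/2) * β := by
              rw [hβ]
              exact mul_le_mul_of_nonneg_right h14 (Real.sqrt_nonneg _)
      have hsplit : β = z₀ ⬝ᵥ S + (z - z₀) ⬝ᵥ S := by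
        rw [← hzS, sub_dotProduct]; ring
      have ht' := hbound z₀ hz₀N
      have h1 := abs_le.mp hzz₀S
      have h2 := abs_le.mp ht'
      linarith [hsplit, h1.2, h2.2]
  -- step (9) : conclusion
  intro y
  rw [hrw]
  have hcs : |y ⬝ᵥ (B *ᵥ (S - θ))| ≤ Real.sqrt (y ⬝ᵥ (B *ᵥ y))
      * Real.sqrt ((S - θ) ⬝ᵥ (B *ᵥ (S - θ))) := my_psd_cs_abs hBpsd _ _
  have htri : Real.sqrt ((S - θ) ⬝ᵥ (B *ᵥ (S - θ))) ≤ 2*t + 1 := by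
    have h := my_psd_sqrt_triangle hBpsd S (-θ)
    have hneg : (-θ) ⬝ᵥ (B *ᵥ (-θ)) = θ ⬝ᵥ (B *ᵥ θ) := by
      rw [Matrix.mulVec_neg, neg_dotProduct, dotProduct_neg, neg_neg]
    rw [hneg] at h
    have hsub : S - θ = S + (-θ) := by abel
    rw [hsub]
    have hθ1 : Real.sqrt (θ ⬝ᵥ (B *ᵥ θ)) ≤ 1 := by
      calc Real.sqrt (θ ⬝ᵥ (B *ᵥ θ)) ≤ Real.sqrt 1 := Real.sqrt_le_sqrt hθB
        _ = 1 := Real.sqrt_one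
    calc Real.sqrt ((S + (-θ)) ⬝ᵥ (B *ᵥ (S + (-θ))))
        ≤ Real.sqrt (S ⬝ᵥ (B *ᵥ S)) + Real.sqrt (θ ⬝ᵥ (B *ᵥ θ)) := h
      _ ≤ 2*t + 1 := add_le_add hβle hθ1
  calc |y ⬝ᵥ (B *ᵥ (S - θ))|
      ≤ Real.sqrt (y ⬝ᵥ (B *ᵥ y)) * Real.sqrt ((S - θ) ⬝ᵥ (B *ᵥ (S - θ))) := hcs
    _ ≤ Real.sqrt (y ⬝ᵥ (B *ᵥ y)) * (2*t + 1) :=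
        mul_le_mul_of_nonneg_left htri (Real.sqrt_nonneg _)
    _ = (1 + 2*t) * Real.sqrt (y ⬝ᵥ (B *ᵥ y)) := by ring

lemma my_chernoff {n : ℕ} {Ω : Type} [MeasurableSpace Ω] (P : Measure Ω)
    [IsProbabilityMeasure P]
    (ξ : Fin n → Ω → ℝ) (hmeas : ∀ i, Measurable (ξ i))
    (hindep : iIndepFun ξ P)
    (hint : ∀ i (l : ℝ), Integrable (fun ω => Real.exp (l * ξ i ω)) P)
    (hmgf : ∀ i (l : ℝ), ∫ ω, Real.exp (l * ξ i ω) ∂P ≤ Real.exp (l ^ 2 / 2))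
    (c : Fin n → ℝ) (hc : ∑ i, c i ^ 2 ≤ 1) (t : ℝ) (ht : 0 ≤ t) :
    P {ω | t ≤ ∑ i, c i * ξ i ω} ≤ ENNReal.ofReal (Real.exp (-(t^2)/2)) := by
  set X : Fin n → Ω → ℝ := fun i ω => c i * ξ i ω with hX
  have hXmeas : ∀ i, Measurable (X i) := fun i => (hmeas i).const_mul (c i)
  have hXindep : iIndepFun X P := by
    have := hindep.comp (fun i (v : ℝ) => c i * v) (fun i => measurable_const_mul _)
    exact this
  have hXint : ∀ i, Integrable (fun ω => Real.exp (t * X i ω)) P := fun i => by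
    have h := hint i (t * c i)
    simp only [hX, mul_assoc] at h ⊢
    exact h
  have hsum_int : Integrable (fun ω => Real.exp (t * (∑ i, X i) ω)) P :=
    hXindep.integrable_exp_mul_sum hXmeas (fun i _ => hXint i)
  have hmgfle : mgf (∑ i, X i) P t ≤ Real.exp (t^2/2) := by
    rw [hXindep.mgf_sum hXmeas]
    have hstep : ∀ i : Fin n, mgf (X i) P t ≤ Real.exp ((t * c i)^2/2) := by
      intro i
      have h := hmgf i (t * c i)
      have : mgf (X i) P t = ∫ ω, Real.exp ((t * c i) * ξ i ω) ∂P := by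
        unfold mgf
        congr 1
        ext ω
        rw [hX]
        ring_nf
      rw [this]
      exact h
    calc ∏ i, mgf (X i) P t ≤ ∏ i, Real.exp ((t * c i)^2/2) :=
          Finset.prod_le_prod (fun i _ => mgf_nonneg) (fun i _ => hstep i)
      _ = Real.exp (∑ i, (t * c i)^2/2) := by rw [Real.exp_sum]
      _ ≤ Real.exp (t^2/2) := by
          apply Real.exp_le_exp.2
          have : ∑ i, (t * c i)^2/2 = (t^2/2) * ∑ i, c i ^2 := by
            rw [Finset.mul_sum]
            refine Finset.sum_congr rfl fun i _ => by ring
          rw [this]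
          nlinarith [sq_nonneg t]
  have hchern := measure_ge_le_exp_mul_mgf (X := ∑ i, X i) (μ := P) (t := t) t ht hsum_int
  have hset : {ω | t ≤ ∑ i, c i * ξ i ω} = {ω | t ≤ (∑ i, X i) ω} := by
    ext ω
    simp [hX, Finset.sum_apply]
  rw [hset]
  rw [ENNReal.le_ofReal_iff_toReal_le (measure_ne_top P _) (Real.exp_nonneg _)]
  calc (P {ω | t ≤ (∑ i, X i) ω}).toReal ≤ Real.exp (-t * t) * mgf (∑ i, X i) P t := hchern
    _ ≤ Real.exp (-t * t) * Real.exp (t^2/2) :=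
        mul_le_mul_of_nonneg_left hmgfle (Real.exp_nonneg _)
    _ = Real.exp (-(t^2)/2) := by
        rw [← Real.exp_add]
        congr 1
        ring


lemma my_const_bound (d : ℕ) (hd : 0 < d) {L t : ℝ} (hL2 : Real.log 2 ≤ L)
    (ht0 : 0 ≤ t) (ht2 : t ^ 2 = 2 * (Real.log 2 + d * Real.log 5 + L)) :
    1 + 2 * t ≤ 10 * (Real.sqrt d + Real.sqrt L) := by
  have hLpos : 0 < L := lt_of_lt_of_le (Real.log_pos (by norm_num)) hL2
  set a : ℝ := Real.sqrt d with hadef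
  set b : ℝ := Real.sqrt L with hbdef
  have ha2 : a ^ 2 = d := Real.sq_sqrt (Nat.cast_nonneg d)
  have hb2 : b ^ 2 = L := Real.sq_sqrt hLpos.le
  have ha1 : 1 ≤ a := by
    rw [hadef, show (1:ℝ) = Real.sqrt 1 by rw [Real.sqrt_one]]
    apply Real.sqrt_le_sqrt
    exact_mod_cast hd
  have hb0 : 0 ≤ b := Real.sqrt_nonneg _
  clear_value a b
  have hb45 : (4/5 : ℝ) ≤ b := by
    nlinarith [Real.log_two_gt_d9, hL2, hb2, hb0]
  have hlog5 : Real.log 5 ≤ 4 := by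
    have h5 : (5:ℝ) ≤ Real.exp 4 := by
      have h4 : Real.exp 4 = (Real.exp 1) ^ (4:ℕ) := by
        rw [← Real.exp_nat_mul]; norm_num
      rw [h4]
      have h27 : (2.7:ℝ) ^ (4:ℕ) < (Real.exp 1) ^ (4:ℕ) :=
        pow_lt_pow_left₀ (by nlinarith [Real.exp_one_gt_d9]) (by norm_num) (by norm_num)
      nlinarith [h27]
    calc Real.log 5 ≤ Real.log (Real.exp 4) := Real.log_le_log (by norm_num) h5
      _ = 4 := Real.log_exp 4
  have hlog2 : Real.log 2 ≤ 1 := by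
    calc Real.log 2 ≤ Real.log (Real.exp 1) :=
          Real.log_le_log (by norm_num) (by nlinarith [Real.exp_one_gt_d9])
      _ = 1 := Real.log_exp 1
  have hlog2pos : (0:ℝ) < Real.log 2 := Real.log_pos (by norm_num)
  have hlog5pos : (0:ℝ) < Real.log 5 := Real.log_pos (by norm_num)
  have hR : 0 ≤ 10 * (a + b) - 1 := by nlinarith
  have htle : t ≤ (10 * (a + b) - 1) / 2 := by
    have harg : 2 * (Real.log 2 + d * Real.log 5 + L) ≤ ((10 * (a + b) - 1) / 2) ^ 2 := by
      nlinarith [ha1, hb45, ha2, hb2, hlog5, hlog2, mul_nonneg (by linarith : (0:ℝ) ≤ a) hb0]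
    calc t = Real.sqrt (t ^ 2) := by rw [Real.sqrt_sq ht0]
      _ ≤ Real.sqrt (((10 * (a + b) - 1) / 2) ^ 2) := Real.sqrt_le_sqrt (by rw [ht2]; exact harg)
      _ = (10 * (a + b) - 1) / 2 := Real.sqrt_sq (by linarith)
  linarith

/-- Uniform confidence region for the ridge estimator (fixed design):
with probability at least `1 − δ`, simultaneously for all `x ∈ ℝ^d`,
`|⟨x, θ̂ − θ⟩| ≤ C(√d + √ln(1/δ)) √(xᵀΛ⁻¹x)`. -/
theorem uniform_confidence_region :
    ∃ C : ℝ, 0 < C ∧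
      ∀ (n d : ℕ), 0 < n → 0 < d →
      ∀ (x : Fin n → Fin d → ℝ) (θ : Fin d → ℝ),
        Real.sqrt (∑ j, θ j ^ 2) ≤ 1 →
      ∀ (Ω : Type) (_ : MeasurableSpace Ω) (P : Measure Ω),
        IsProbabilityMeasure P →
      ∀ (ξ : Fin n → Ω → ℝ),
        (∀ i, Measurable (ξ i)) →
        iIndepFun ξ P →
        (∀ i, ∫ ω, ξ i ω ∂P = 0) →
        (∀ i (l : ℝ), Integrable (fun ω => Real.exp (l * ξ i ω)) P) →
        (∀ i (l : ℝ), ∫ ω, Real.exp (l * ξ i ω) ∂P ≤ Real.exp (l ^ 2 / 2)) →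
      ∀ δ : ℝ, δ ∈ Set.Ioc (0 : ℝ) (1 / 2) →
        ENNReal.ofReal (1 - δ) ≤
          P {ω | ∀ y : Fin d → ℝ,
            |y ⬝ᵥ (((1 + ∑ i : Fin n, vecMulVec (x i) (x i))⁻¹
                      *ᵥ (∑ i : Fin n, (x i ⬝ᵥ θ + ξ i ω) • x i)) - θ)|
              ≤ C * (Real.sqrt d + Real.sqrt (Real.log (1 / δ)))
                  * Real.sqrt (y ⬝ᵥ (1 + ∑ i : Fin n, vecMulVec (x i) (x i))⁻¹ *ᵥ y)} := by
  refine ⟨10, by norm_num, ?_⟩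
  intro n d hn hd x θ hθ Ω mΩ P hP ξ hmeas hindep _hmean hint hmgf δ hδ
  obtain ⟨hδ0, hδhalf⟩ := hδ
  -- basic setup
  set M : Matrix (Fin d) (Fin d) ℝ := ∑ i : Fin n, vecMulVec (x i) (x i) with hMdef
  set Λ : Matrix (Fin d) (Fin d) ℝ := 1 + M with hΛdef
  have hMpsd : M.PosSemidef := my_M_psd x
  have hΛpd : Λ.PosDef := Matrix.PosDef.one.add_posSemidef hMpsd
  have hθsum : ∑ j, θ j ^ 2 ≤ 1 := by
    have h0 : 0 ≤ ∑ j, θ j ^ 2 := by positivity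
    nlinarith [Real.sq_sqrt h0, Real.sqrt_nonneg (∑ j, θ j ^ 2)]
  -- net
  obtain ⟨N, hNcard, hNball, hNnet⟩ := my_matrix_net hΛpd
  -- constants
  set L : ℝ := Real.log (1 / δ) with hLdef
  have hL2 : Real.log 2 ≤ L := by
    rw [hLdef]
    apply Real.log_le_log (by norm_num)
    rw [le_div_iff₀ hδ0]
    linarith
  have hlog2pos : (0:ℝ) < Real.log 2 := Real.log_pos (by norm_num)
  have hlog5pos : (0:ℝ) < Real.log 5 := Real.log_pos (by norm_num)
  have hLpos : 0 < L := lt_of_lt_of_le hlog2pos hL2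
  set targ : ℝ := 2 * (Real.log 2 + d * Real.log 5 + L) with htargdef
  have htargpos : 0 < targ := by
    rw [htargdef]
    have : (0:ℝ) ≤ d * Real.log 5 := by positivity
    nlinarith
  set t : ℝ := Real.sqrt targ with htdef
  have ht0 : 0 ≤ t := Real.sqrt_nonneg _
  have ht2 : t ^ 2 = targ := Real.sq_sqrt htargpos.le
  clear_value L targ t
  -- per-point quadratic form bound
  have hc_of_mem : ∀ z ∈ N, ∑ i, (z ⬝ᵥ x i) ^ 2 ≤ 1 := by
    intro z hz
    have hball := hNball z hz
    have hexp : z ⬝ᵥ (Λ *ᵥ z) = z ⬝ᵥ z + ∑ i, (z ⬝ᵥ x i) ^ 2 := by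
      rw [hΛdef, add_mulVec, one_mulVec, dotProduct_add, hMdef, my_sum_mulVec,
        my_dotProduct_sum]
      congr 1
      refine Finset.sum_congr rfl fun i _ => ?_
      rw [my_vecMulVec_mulVec, dotProduct_smul, smul_eq_mul, dotProduct_comm z (x i)]
      ring
    have hzz : 0 ≤ z ⬝ᵥ z := by
      have : z ⬝ᵥ z = ∑ j, z j ^ 2 := by simp [dotProduct, pow_two]
      rw [this]; positivity
    rw [hexp] at hball
    linarith
  -- the bad event
  set Y : (Fin d → ℝ) → Ω → ℝ := fun z ω => ∑ i, (z ⬝ᵥ x i) * ξ i ω with hYdef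
  have hYmeas : ∀ z, Measurable (Y z) := by
    intro z
    apply Finset.measurable_sum
    intro i _
    exact (hmeas i).const_mul _
  have hYS : ∀ z (ω : Ω), Y z ω = z ⬝ᵥ (∑ i, ξ i ω • x i) := by
    intro z ω
    rw [my_dotProduct_sum]
    refine Finset.sum_congr rfl fun i _ => ?_
    rw [dotProduct_smul, smul_eq_mul, mul_comm]
  set A : Set Ω := ⋃ z ∈ N, {ω | t < |Y z ω|} with hAdef
  have hAmeas : MeasurableSet A := by
    refine Set.Finite.measurableSet_biUnion N.finite_toSet fun z _ => ?_
    exact measurableSet_lt measurable_const (hYmeas z).abs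
  -- probability of bad event
  have hPA : P A ≤ ENNReal.ofReal δ := by
    have hone : ∀ z ∈ N, P {ω | t < |Y z ω|}
        ≤ ENNReal.ofReal (Real.exp (-(t^2)/2)) + ENNReal.ofReal (Real.exp (-(t^2)/2)) := by
      intro z hz
      have hsubset : {ω | t < |Y z ω|}
          ⊆ {ω | t ≤ ∑ i, (z ⬝ᵥ x i) * ξ i ω} ∪ {ω | t ≤ ∑ i, ((-z) ⬝ᵥ x i) * ξ i ω} := by
        intro ω hω
        simp only [Set.mem_setOf_eq] at hω
        rcases abs_cases (Y z ω) with ⟨habs, _⟩ | ⟨habs, _⟩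
        · left
          exact Set.mem_setOf_eq ▸ (by rw [← hYdef] at *; linarith [hω, habs.symm.le] : t ≤ Y z ω)
        · right
          have : t ≤ -(Y z ω) := by rw [← habs]; exact hω.le
          have hneg : ∑ i, ((-z) ⬝ᵥ x i) * ξ i ω = -(Y z ω) := by
            rw [hYdef]
            simp only [neg_dotProduct, neg_mul]
            rw [← Finset.sum_neg_distrib]
          exact Set.mem_setOf_eq ▸ (hneg ▸ this)
      have h1 := my_chernoff P ξ hmeas hindep hint hmgf (fun i => z ⬝ᵥ x i)
        (hc_of_mem z hz) t ht0
      have hcneg : ∑ i, ((-z) ⬝ᵥ x i) ^ 2 ≤ 1 := by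
        have : ∀ i, ((-z) ⬝ᵥ x i) ^ 2 = (z ⬝ᵥ x i) ^ 2 := by
          intro i; rw [neg_dotProduct]; ring
        rw [Finset.sum_congr rfl fun i _ => this i]
        exact hc_of_mem z hz
      have h2 := my_chernoff P ξ hmeas hindep hint hmgf (fun i => (-z) ⬝ᵥ x i) hcneg t ht0
      calc P {ω | t < |Y z ω|}
          ≤ P ({ω | t ≤ ∑ i, (z ⬝ᵥ x i) * ξ i ω} ∪ {ω | t ≤ ∑ i, ((-z) ⬝ᵥ x i) * ξ i ω}) :=
            measure_mono hsubset
        _ ≤ P {ω | t ≤ ∑ i, (z ⬝ᵥ x i) * ξ i ω} + P {ω | t ≤ ∑ i, ((-z) ⬝ᵥ x i) * ξ i ω} :=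
            measure_union_le _ _
        _ ≤ _ := add_le_add h1 h2
    -- numeric computation
    have hval : Real.exp (-(t^2)/2) = δ / (2 * 5 ^ d) := by
      rw [ht2, htargdef]
      have : -(2 * (Real.log 2 + ↑d * Real.log 5 + L)) / 2
          = -Real.log 2 + (-(↑d * Real.log 5)) + (-L) := by ring
      rw [this, Real.exp_add, Real.exp_add]
      have e1 : Real.exp (-Real.log 2) = 1/2 := by
        rw [Real.exp_neg, Real.exp_log (by norm_num : (0:ℝ) < 2)]; norm_num
      have e2 : Real.exp (-(↑d * Real.log 5)) = ((5:ℝ) ^ d)⁻¹ := by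
        rw [Real.exp_neg]
        congr 1
        rw [Real.exp_nat_mul, Real.exp_log (by norm_num : (0:ℝ) < 5)]
      have e3 : Real.exp (-L) = δ := by
        rw [hLdef, one_div, Real.log_inv, neg_neg, Real.exp_log hδ0]
      rw [e1, e2, e3]
      field_simp
    calc P A ≤ ∑ z ∈ N, P {ω | t < |Y z ω|} := measure_biUnion_finset_le _ _
      _ ≤ ∑ _z ∈ N, (ENNReal.ofReal (Real.exp (-(t^2)/2)) + ENNReal.ofReal (Real.exp (-(t^2)/2))) :=
          Finset.sum_le_sum hone
      _ = (N.card : ℝ≥0∞) * ENNReal.ofReal (2 * Real.exp (-(t^2)/2)) := by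
          rw [Finset.sum_const, nsmul_eq_mul]
          congr 1
          rw [ENNReal.ofReal_mul (by norm_num), ENNReal.ofReal_ofNat, two_mul]
      _ ≤ ENNReal.ofReal δ := by
          rw [hval, ← ENNReal.ofReal_natCast, ← ENNReal.ofReal_mul (by positivity)]
          apply ENNReal.ofReal_le_ofReal
          have h5 : (0:ℝ) < 2 * 5 ^ d := by positivity
          have hcard : (N.card : ℝ) ≤ (5:ℝ) ^ d := by
            have : ((5 ^ d : ℕ) : ℝ) = (5:ℝ) ^ d := by push_cast; ring
            rw [← this]
            exact_mod_cast hNcard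
          have e : (2:ℝ) * (δ / (2 * 5 ^ d)) = δ * ((5:ℝ)^d)⁻¹ := by
            field_simp
          rw [e]
          calc (N.card : ℝ) * (δ * ((5:ℝ)^d)⁻¹) ≤ (5:ℝ)^d * (δ * ((5:ℝ)^d)⁻¹) := by
                apply mul_le_mul_of_nonneg_right hcard (by positivity)
            _ = δ := by field_simp
  -- good event implies conclusion
  have hgood : Aᶜ ⊆ {ω | ∀ y : Fin d → ℝ,
      |y ⬝ᵥ ((Λ⁻¹ *ᵥ (∑ i : Fin n, (x i ⬝ᵥ θ + ξ i ω) • x i)) - θ)|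
        ≤ 10 * (Real.sqrt d + Real.sqrt L)
            * Real.sqrt (y ⬝ᵥ Λ⁻¹ *ᵥ y)} := by
    intro ω hω
    simp only [hAdef, Set.compl_iUnion, Set.mem_iInter, Set.mem_compl_iff, Set.mem_setOf_eq,
      not_lt] at hω
    have hbound : ∀ z ∈ N, |z ⬝ᵥ (∑ i, ξ i ω • x i)| ≤ t := by
      intro z hz
      rw [← hYS]
      exact hω z hz
    have hdet := my_det_core x θ hθsum (fun i => ξ i ω) N t ht0 hNnet hbound
    intro y
    refine (hdet y).trans ?_
    have hqy : 0 ≤ Real.sqrt (y ⬝ᵥ (1 + ∑ i : Fin n, vecMulVec (x i) (x i))⁻¹ *ᵥ y) :=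
      Real.sqrt_nonneg _
    apply mul_le_mul_of_nonneg_right _ hqy
    have hconst := my_const_bound d hd hL2 ht0 (by rw [ht2, htargdef])
    linarith
  -- final measure bound
  calc ENNReal.ofReal (1 - δ) = 1 - ENNReal.ofReal δ := by
        rw [ENNReal.ofReal_sub 1 hδ0.le, ENNReal.ofReal_one]
    _ ≤ 1 - P A := by
        exact tsub_le_tsub_left hPA 1
    _ = P Aᶜ := (prob_compl_eq_one_sub hAmeas).symm
    _ ≤ P _ := measure_mono hgood
end

section
/- There exists a universal constant C > 0 with the following property. For all integers d ≥ 1 and T ≥ 16, and all vectors x_1, ..., x_T ∈ ℝ^d with ‖x_t‖₂ ≤ 1, define Λ_0 = I_d, Λ_t = Λ_{t-1} + x_t x_tᵀ, ω_t = √(x_tᵀ Λ_{t-1}^{-1} x_t), and α_t = √(max{1, ln((T ln T) ω_t² / d)}) for t = 1, ..., T. Then ∑_{t=1}^{T} (√d + α_t) ω_t ≤ C (d √(T ln T) + √(d T ln T · ln ln T)). -/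
open Matrix BigOperators

set_option linter.unusedSectionVars false
set_option maxHeartbeats 1000000

variable {n : Type*} [Fintype n] [DecidableEq n]

lemma mrc_dp_sq (u y : n → ℝ) : (u ⬝ᵥ y)^2 ≤ (u ⬝ᵥ u) * (y ⬝ᵥ y) := by
  have := Finset.sum_mul_sq_le_sq_mul_sq Finset.univ u y
  simpa [dotProduct, sq] using this

lemma mrc_quad_vecMulVec (u y : n → ℝ) :
    y ⬝ᵥ (vecMulVec u u *ᵥ y) = (u ⬝ᵥ y) ^ 2 := by
  simp only [mulVec, dotProduct, vecMulVec_apply, Finset.mul_sum]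
  rw [sq, Finset.sum_mul_sum]
  apply Finset.sum_congr rfl; intro i _
  apply Finset.sum_congr rfl; intro j _
  ring

lemma mrc_dotProduct_self_pos {y : n → ℝ} (hy : y ≠ 0) : 0 < y ⬝ᵥ y := by
  rcases lt_or_eq_of_le (Finset.sum_nonneg fun i _ => mul_self_nonneg (y i) :
      (0:ℝ) ≤ ∑ i, y i * y i) with h | h
  · exact h
  · exact absurd (dotProduct_self_eq_zero.mp h.symm) hy

lemma mrc_det_add_vecMulVec (A : Matrix n n ℝ) (hA : IsUnit A.det) (u : n → ℝ) :
    (A + vecMulVec u u).det = A.det * (1 + u ⬝ᵥ (A⁻¹ *ᵥ u)) := by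
  rw [vecMulVec_eq Unit, Matrix.det_add_replicateCol_mul_replicateRow hA]
  congr 1
  rw [det_unique]
  simp only [Matrix.add_apply, Matrix.one_apply_eq, Matrix.mul_apply, Matrix.replicateRow_apply,
    Matrix.replicateCol_apply, dotProduct_mulVec, vecMul, dotProduct, mulVec, Finset.sum_mul]
  congr 1
  simp only [Finset.sum_mul, Finset.mul_sum]
  rw [Finset.sum_comm]
  apply Finset.sum_congr rfl; intro j _
  apply Finset.sum_congr rfl; intro i _
  ring

lemma mrc_vecMulVec_herm (u : n → ℝ) : (vecMulVec u u).IsHermitian := by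
  unfold Matrix.IsHermitian
  ext i j
  simp [vecMulVec_apply, conjTranspose_apply, mul_comm]

lemma mrc_half_le_log_one_add {u : ℝ} (h0 : 0 ≤ u) (h1 : u ≤ 1) :
    u ≤ 2 * Real.log (1 + u) := by
  have h := Real.add_one_le_exp (-(u/2))
  have hep : (0:ℝ) < Real.exp (u/2) := Real.exp_pos _
  have hexp : Real.exp (u/2) ≤ 1 + u := by
    rw [Real.exp_neg] at h
    have h2 : (1 - u/2) * Real.exp (u/2) ≤ 1 := by
      have hinv : (Real.exp (u/2))⁻¹ * Real.exp (u/2) = 1 := inv_mul_cancel₀ hep.ne'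
      nlinarith [h, hep]
    nlinarith
  have := Real.log_le_log hep hexp
  rw [Real.log_exp] at this
  linarith

/-- Deterministic core of the main regret bound:
`∑_t (√d + α_t) ω_t ≤ C (d√(T ln T) + √(d T ln T · ln ln T))`, where
`ω_t = √(x_tᵀ Λ_{t-1}⁻¹ x_t)` and `α_t = √(max{1, ln((T ln T) ω_t²/d)})`. -/
theorem main_regret_core :
    ∃ C : ℝ, 0 < C ∧
      ∀ (d T : ℕ), 1 ≤ d → 16 ≤ T →
      ∀ (x : Fin T → Fin d → ℝ), (∀ t, Real.sqrt (∑ i, x t i ^ 2) ≤ 1) →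
      ∀ (Λ : ℕ → Matrix (Fin d) (Fin d) ℝ), Λ 0 = 1 →
        (∀ t : Fin T, Λ ((t : ℕ) + 1) = Λ t + vecMulVec (x t) (x t)) →
      ∑ t : Fin T,
          (Real.sqrt d
            + Real.sqrt (max 1
                (Real.log ((T * Real.log T) * (x t ⬝ᵥ (Λ t)⁻¹ *ᵥ x t) / d))))
            * Real.sqrt (x t ⬝ᵥ (Λ t)⁻¹ *ᵥ x t)
        ≤ C * (d * Real.sqrt (T * Real.log T)
            + Real.sqrt (d * T * Real.log T * Real.log (Real.log T))) := by
  refine ⟨5, by norm_num, ?_⟩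
  intro d T hd hT x hx Λ hΛ0 hrec
  -- basic bounds on x
  have hx2 : ∀ t, x t ⬝ᵥ x t ≤ 1 := by
    intro t
    have h := hx t
    have hnn : (0:ℝ) ≤ ∑ i, x t i ^ 2 := Finset.sum_nonneg fun i _ => sq_nonneg _
    have : (∑ i, x t i ^ 2) ≤ 1 := by
      nlinarith [Real.sq_sqrt hnn, Real.sqrt_nonneg (∑ i, x t i ^ 2)]
    simpa [dotProduct, sq] using this
  -- quadratic form bounds by induction
  have hlow : ∀ k, k ≤ T → ∀ y : Fin d → ℝ, y ⬝ᵥ y ≤ y ⬝ᵥ (Λ k *ᵥ y) := by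
    intro k
    induction k with
    | zero => intro _ y; rw [hΛ0, one_mulVec]
    | succ k ih =>
      intro hk y
      have hkT : k < T := hk
      rw [hrec ⟨k, hkT⟩, add_mulVec, dotProduct_add, mrc_quad_vecMulVec]
      have := ih (le_of_lt hkT) y
      nlinarith [sq_nonneg ((x ⟨k, hkT⟩) ⬝ᵥ y)]
  have hup : ∀ k, k ≤ T → ∀ y : Fin d → ℝ, y ⬝ᵥ (Λ k *ᵥ y) ≤ (1 + k) * (y ⬝ᵥ y) := by
    intro k
    induction k with
    | zero => intro _ y; rw [hΛ0, one_mulVec]; push_cast; linarith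
    | succ k ih =>
      intro hk y
      have hkT : k < T := hk
      rw [hrec ⟨k, hkT⟩, add_mulVec, dotProduct_add, mrc_quad_vecMulVec]
      have h1 := ih (le_of_lt hkT) y
      have h2 : ((x ⟨k, hkT⟩) ⬝ᵥ y)^2 ≤ y ⬝ᵥ y := by
        have := mrc_dp_sq (x ⟨k, hkT⟩) y
        have hyy : (0:ℝ) ≤ y ⬝ᵥ y := Finset.sum_nonneg fun i _ => mul_self_nonneg _
        nlinarith [hx2 ⟨k, hkT⟩]
      push_cast
      push_cast at h1
      nlinarith
  -- hermitian and PosDef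
  have hherm : ∀ k, k ≤ T → (Λ k).IsHermitian := by
    intro k
    induction k with
    | zero => intro _; rw [hΛ0]; exact isHermitian_one
    | succ k ih =>
      intro hk
      have hkT : k < T := hk
      rw [hrec ⟨k, hkT⟩]
      exact (ih (le_of_lt hkT)).add (mrc_vecMulVec_herm _)
  have hpd : ∀ k, k ≤ T → (Λ k).PosDef := by
    intro k hk
    refine PosDef.of_dotProduct_mulVec_pos (hherm k hk) fun y hy => ?_
    rw [star_trivial]
    exact lt_of_lt_of_le (mrc_dotProduct_self_pos hy) (hlow k hk y)
  -- the quantity w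
  set w : Fin T → ℝ := fun t => x t ⬝ᵥ ((Λ t)⁻¹ *ᵥ x t) with hw
  have hw0 : ∀ t, 0 ≤ w t := by
    intro t
    have := ((hpd t (le_of_lt t.isLt)).inv).posSemidef.dotProduct_mulVec_nonneg (x t)
    rwa [star_trivial] at this
  have hw1 : ∀ t, w t ≤ 1 := by
    intro t
    set A := Λ (t : ℕ) with hA
    have hpdA := hpd t (le_of_lt t.isLt)
    have hdet : IsUnit A.det := hpdA.det_pos.ne'.isUnit
    set y : Fin d → ℝ := A⁻¹ *ᵥ x t with hy
    have hAy : A *ᵥ y = x t := by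
      rw [hy, mulVec_mulVec, mul_nonsing_inv A hdet, one_mulVec]
    have hwt : w t = y ⬝ᵥ (A *ᵥ y) := by
      rw [hw]; simp only; rw [← hy, ← hAy, dotProduct_comm, hAy]
    have hyy : y ⬝ᵥ y ≤ w t := by rw [hwt]; exact hlow t (le_of_lt t.isLt) y
    have hcs : (w t)^2 ≤ (x t ⬝ᵥ x t) * (y ⬝ᵥ y) := by
      have : w t = x t ⬝ᵥ y := rfl
      rw [this]; exact mrc_dp_sq _ _
    have hynn : (0:ℝ) ≤ y ⬝ᵥ y := Finset.sum_nonneg fun i _ => mul_self_nonneg _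
    nlinarith [hw0 t, hx2 t]
  -- determinant potential
  have hlog : ∀ k, k ≤ T →
      ∑ t ∈ Finset.filter (fun t : Fin T => (t:ℕ) < k) Finset.univ, w t
        ≤ 2 * Real.log ((Λ k).det) := by
    intro k
    induction k with
    | zero => intro _; simp [hΛ0]
    | succ k ih =>
      intro hk
      have hkT : k < T := hk
      set t₀ : Fin T := ⟨k, hkT⟩ with ht₀
      have hins : Finset.filter (fun t : Fin T => (t:ℕ) < k + 1) Finset.univ
          = insert t₀ (Finset.filter (fun t : Fin T => (t:ℕ) < k) Finset.univ) := by
        ext t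
        simp only [Finset.mem_filter, Finset.mem_insert, Finset.mem_univ, true_and, ht₀,
          Fin.ext_iff]
        omega
      have hnot : t₀ ∉ Finset.filter (fun t : Fin T => (t:ℕ) < k) Finset.univ := by simp [ht₀]
      rw [hins, Finset.sum_insert hnot]
      have hdetk : 0 < (Λ k).det := (hpd k (le_of_lt hkT)).det_pos
      have hdetrec : (Λ (k+1)).det = (Λ k).det * (1 + w t₀) := by
        rw [hrec t₀]
        exact mrc_det_add_vecMulVec _ hdetk.ne'.isUnit _
      have hwpos : 0 < 1 + w t₀ := by nlinarith [hw0 t₀]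
      rw [hdetrec, Real.log_mul hdetk.ne' hwpos.ne']
      have h1 := mrc_half_le_log_one_add (hw0 t₀) (hw1 t₀)
      have h2 := ih (le_of_lt hkT)
      linarith
  -- eigenvalue bound on det
  have hdet_le : (Λ T).det ≤ (1 + (T:ℝ))^d := by
    have hpdT := hpd T le_rfl
    have herm := hpdT.isHermitian
    have hdetT : (Λ T).det = ∏ i, herm.eigenvalues i := by
      simpa using herm.det_eq_prod_eigenvalues
    rw [hdetT]
    have heig : ∀ i, herm.eigenvalues i ≤ 1 + (T:ℝ) := by
      intro i
      set v : Fin d → ℝ := ⇑(herm.eigenvectorBasis i) with hv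
      have hmv : Λ T *ᵥ v = herm.eigenvalues i • v := by
        simpa using herm.mulVec_eigenvectorBasis i
      have hvne : v ≠ 0 := by
        intro h
        exact herm.eigenvectorBasis.orthonormal.ne_zero i (by ext j; exact congrFun h j)
      have hvv : 0 < v ⬝ᵥ v := mrc_dotProduct_self_pos hvne
      have hq : v ⬝ᵥ (Λ T *ᵥ v) = herm.eigenvalues i * (v ⬝ᵥ v) := by
        rw [hmv, dotProduct_smul, smul_eq_mul]
      have := hup T le_rfl v
      rw [hq] at this
      have := (mul_le_mul_iff_left₀ hvv).mp this
      linarith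
    calc ∏ i, herm.eigenvalues i ≤ ∏ _i : Fin d, (1 + (T:ℝ)) :=
          Finset.prod_le_prod (fun i _ => (hpdT.eigenvalues_pos i).le) (fun i _ => heig i)
      _ = (1 + (T:ℝ))^d := by rw [Finset.prod_const, Finset.card_univ, Fintype.card_fin]
  -- the potential bound
  set L : ℝ := Real.log (T:ℝ) with hLdef
  set M : ℝ := Real.log L with hMdef
  have hd0 : (0:ℝ) < d := by exact_mod_cast hd
  have hT0 : (16:ℝ) ≤ (T:ℝ) := by exact_mod_cast hT
  have hlog2l := Real.log_two_gt_d9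
  have hlog2u := Real.log_two_lt_d9
  have h16 : Real.log 16 = 4 * Real.log 2 := by
    rw [show (16:ℝ) = 2^4 by norm_num, Real.log_pow]; push_cast; ring
  have hL277 : (2.772:ℝ) < L := by
    have : Real.log 16 ≤ L := Real.log_le_log (by norm_num) hT0
    rw [h16] at this; nlinarith
  have hL0 : (0:ℝ) < L := by linarith
  have hM1 : (1:ℝ) < M := by
    have he : Real.exp 1 < L := by
      have := Real.exp_one_lt_d9; nlinarith
    have := Real.log_lt_log (Real.exp_pos 1) he
    rwa [Real.log_exp] at this
  have hM0 : (0:ℝ) < M := by linarith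
  have hW : ∑ t : Fin T, w t ≤ 4 * d * L := by
    have huniv : Finset.filter (fun t : Fin T => (t:ℕ) < T) Finset.univ = Finset.univ := by
      apply Finset.filter_true_of_mem; intro t _; exact t.isLt
    have h1 : ∑ t : Fin T, w t ≤ 2 * Real.log ((Λ T).det) := by
      have := hlog T le_rfl; rwa [huniv] at this
    have hdetpos := (hpd T le_rfl).det_pos
    have h2 : Real.log ((Λ T).det) ≤ Real.log ((1 + (T:ℝ))^d) :=
      Real.log_le_log hdetpos hdet_le
    rw [Real.log_pow] at h2
    have h3 : Real.log (1 + (T:ℝ)) ≤ 2 * L := by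
      have hle : (1:ℝ) + T ≤ (T:ℝ)^2 := by nlinarith
      have := Real.log_le_log (by positivity) hle
      rw [Real.log_pow, ← hLdef] at this
      push_cast at this
      linarith
    have hd0' : (0:ℝ) ≤ d := hd0.le
    calc ∑ t : Fin T, w t ≤ 2 * ((d:ℝ) * Real.log (1 + (T:ℝ))) := by linarith
      _ ≤ 2 * ((d:ℝ) * (2*L)) := by nlinarith
      _ = 4 * d * L := by ring
  have hWnn : (0:ℝ) ≤ ∑ t : Fin T, w t := Finset.sum_nonneg fun t _ => hw0 t
  -- alpha
  set α : Fin T → ℝ := fun t => Real.sqrt (max 1 (Real.log ((T:ℝ) * L * w t / d))) with hαdef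
  have hαnn : ∀ t, 0 ≤ α t := fun t => Real.sqrt_nonneg _
  have hα2 : ∀ t, (α t)^2 = max 1 (Real.log ((T:ℝ) * L * w t / d)) := by
    intro t
    exact Real.sq_sqrt (le_trans zero_le_one (le_max_left _ _))
  have hz0pos : (0:ℝ) < 4 * L^2 := by positivity
  have hlz0nn : (0:ℝ) ≤ Real.log (4*L^2) := Real.log_nonneg (by nlinarith)
  have hkey : ∀ t, max 1 (Real.log ((T:ℝ) * L * w t / d))
      ≤ 1 + Real.log (4*L^2) + ((T:ℝ)*L/d) * w t / (4*L^2) := by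
    intro t
    have hterm3 : (0:ℝ) ≤ ((T:ℝ)*L/d) * w t / (4*L^2) := by
      have := hw0 t; positivity
    apply max_le (by linarith)
    rcases eq_or_lt_of_le (hw0 t) with h | h
    · rw [← h]
      norm_num
      linarith
    · have hz : (0:ℝ) < (T:ℝ) * L * w t / d := by positivity
      have hlog := Real.log_le_sub_one_of_pos (show (0:ℝ) < ((T:ℝ) * L * w t / d) / (4*L^2) by positivity)
      rw [Real.log_div hz.ne' hz0pos.ne'] at hlog
      have heq : ((T:ℝ) * L * w t / d) / (4*L^2) = ((T:ℝ)*L/d) * w t / (4*L^2) := by ring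
      rw [heq] at hlog
      linarith
  have hsumα2 : ∑ t : Fin T, (α t)^2 ≤ 6 * T * M := by
    have h1 : ∑ t : Fin T, (α t)^2
        ≤ ∑ t : Fin T, (1 + Real.log (4*L^2) + ((T:ℝ)*L/d) * w t / (4*L^2)) := by
      apply Finset.sum_le_sum
      intro t _
      rw [hα2 t]; exact hkey t
    have h2 : ∑ t : Fin T, (1 + Real.log (4*L^2) + ((T:ℝ)*L/d) * w t / (4*L^2))
        = (T:ℝ) * (1 + Real.log (4*L^2)) + (((T:ℝ)*L/d) / (4*L^2)) * ∑ t : Fin T, w t := by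
      rw [Finset.sum_add_distrib, Finset.sum_const, Finset.mul_sum, Finset.card_univ,
        Fintype.card_fin]
      simp only [nsmul_eq_mul]
      congr 1
      apply Finset.sum_congr rfl; intro t _; ring
    have h3 : (((T:ℝ)*L/d) / (4*L^2)) * ∑ t : Fin T, w t ≤ (T:ℝ) := by
      have hc : (0:ℝ) ≤ ((T:ℝ)*L/d) / (4*L^2) := by positivity
      calc (((T:ℝ)*L/d) / (4*L^2)) * ∑ t : Fin T, w t
          ≤ (((T:ℝ)*L/d) / (4*L^2)) * (4*d*L) := by
            apply mul_le_mul_of_nonneg_left hW hc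
        _ = (T:ℝ) := by field_simp
    have hlog4 : Real.log (4*L^2) = Real.log 4 + 2 * M := by
      rw [Real.log_mul (by norm_num) (by positivity), Real.log_pow, hMdef]
      push_cast; ring
    have hlog4' : Real.log 4 ≤ 1.4 := by
      rw [show (4:ℝ) = 2^2 by norm_num, Real.log_pow]
      push_cast; nlinarith
    have hTnn : (0:ℝ) ≤ (T:ℝ) := by positivity
    calc ∑ t : Fin T, (α t)^2 ≤ (T:ℝ) * (1 + Real.log (4*L^2)) + (T:ℝ) := by
          rw [h2] at h1; linarith
      _ ≤ 6 * T * M := by rw [hlog4]; nlinarith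
  -- Cauchy-Schwarz bounds
  have hsqw : ∀ t : Fin T, Real.sqrt (w t) ^ 2 = w t := fun t => Real.sq_sqrt (hw0 t)
  have hA1sq : (∑ t : Fin T, Real.sqrt (w t))^2 ≤ (T:ℝ) * ∑ t : Fin T, w t := by
    have := Finset.sum_mul_sq_le_sq_mul_sq Finset.univ (fun _ : Fin T => (1:ℝ))
      (fun t => Real.sqrt (w t))
    simpa [hsqw, Finset.card_univ] using this
  have hA2sq : (∑ t : Fin T, α t * Real.sqrt (w t))^2
      ≤ (∑ t : Fin T, (α t)^2) * ∑ t : Fin T, w t := by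
    have := Finset.sum_mul_sq_le_sq_mul_sq Finset.univ α (fun t => Real.sqrt (w t))
    simpa [hsqw] using this
  have hA1nn : (0:ℝ) ≤ ∑ t : Fin T, Real.sqrt (w t) :=
    Finset.sum_nonneg fun t _ => Real.sqrt_nonneg _
  have hA2nn : (0:ℝ) ≤ ∑ t : Fin T, α t * Real.sqrt (w t) :=
    Finset.sum_nonneg fun t _ => mul_nonneg (hαnn t) (Real.sqrt_nonneg _)
  have hTL : (0:ℝ) ≤ (T:ℝ) * L := by positivity
  have hsTL : Real.sqrt ((T:ℝ)*L)^2 = (T:ℝ)*L := Real.sq_sqrt hTL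
  have hbound1 : Real.sqrt d * ∑ t : Fin T, Real.sqrt (w t) ≤ 2 * (d * Real.sqrt ((T:ℝ)*L)) := by
    have hb : (0:ℝ) ≤ 2 * (d * Real.sqrt ((T:ℝ)*L)) := by positivity
    have hsd : Real.sqrt (d:ℝ)^2 = (d:ℝ) := Real.sq_sqrt hd0.le
    have hsq : (Real.sqrt d * ∑ t : Fin T, Real.sqrt (w t))^2 ≤ (2 * (d * Real.sqrt ((T:ℝ)*L)))^2 := by
      have h1 : (Real.sqrt d * ∑ t : Fin T, Real.sqrt (w t))^2
          = (d:ℝ) * (∑ t : Fin T, Real.sqrt (w t))^2 := by rw [mul_pow, hsd]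
      have h2 : (2 * (d * Real.sqrt ((T:ℝ)*L)))^2 = 4 * (d:ℝ)^2 * ((T:ℝ)*L) := by
        rw [mul_pow, mul_pow, hsTL]; ring
      rw [h1, h2]
      calc (d:ℝ) * (∑ t : Fin T, Real.sqrt (w t))^2 ≤ (d:ℝ) * ((T:ℝ) * ∑ t : Fin T, w t) :=
            mul_le_mul_of_nonneg_left hA1sq hd0.le
        _ ≤ (d:ℝ) * ((T:ℝ) * (4*d*L)) := by
            apply mul_le_mul_of_nonneg_left _ hd0.le
            apply mul_le_mul_of_nonneg_left hW (by positivity)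
        _ = 4 * (d:ℝ)^2 * ((T:ℝ)*L) := by ring
    nlinarith [mul_nonneg (Real.sqrt_nonneg (d:ℝ)) hA1nn, hb]
  have hbound2 : ∑ t : Fin T, α t * Real.sqrt (w t) ≤ 5 * Real.sqrt ((d:ℝ)*T*L*M) := by
    have hdtlm : (0:ℝ) ≤ (d:ℝ)*T*L*M := by positivity
    have hs : Real.sqrt ((d:ℝ)*T*L*M)^2 = (d:ℝ)*T*L*M := Real.sq_sqrt hdtlm
    have hsq : (∑ t : Fin T, α t * Real.sqrt (w t))^2 ≤ (5 * Real.sqrt ((d:ℝ)*T*L*M))^2 := by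
      have h2 : (5 * Real.sqrt ((d:ℝ)*T*L*M))^2 = 25 * ((d:ℝ)*T*L*M) := by
        rw [mul_pow, hs]; ring
      rw [h2]
      calc (∑ t : Fin T, α t * Real.sqrt (w t))^2
          ≤ (∑ t : Fin T, (α t)^2) * ∑ t : Fin T, w t := hA2sq
        _ ≤ (6 * T * M) * (4*d*L) := by
            apply mul_le_mul hsumα2 hW hWnn (by positivity)
        _ = 24 * ((d:ℝ)*T*L*M) := by ring
        _ ≤ 25 * ((d:ℝ)*T*L*M) := by nlinarith
    nlinarith [hA2nn, Real.sqrt_nonneg ((d:ℝ)*T*L*M)]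
  -- assemble
  have hterm : ∀ t : Fin T,
      (Real.sqrt d + Real.sqrt (max 1
          (Real.log ((T:ℝ) * L * (x t ⬝ᵥ (Λ (t:ℕ))⁻¹ *ᵥ x t) / d))))
        * Real.sqrt (x t ⬝ᵥ (Λ (t:ℕ))⁻¹ *ᵥ x t)
      = Real.sqrt d * Real.sqrt (w t) + α t * Real.sqrt (w t) := by
    intro t
    show (Real.sqrt d + α t) * Real.sqrt (w t) = _
    ring
  calc ∑ t : Fin T,
        (Real.sqrt d + Real.sqrt (max 1
            (Real.log ((T:ℝ) * L * (x t ⬝ᵥ (Λ (t:ℕ))⁻¹ *ᵥ x t) / d))))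
          * Real.sqrt (x t ⬝ᵥ (Λ (t:ℕ))⁻¹ *ᵥ x t)
      = Real.sqrt d * ∑ t : Fin T, Real.sqrt (w t) + ∑ t : Fin T, α t * Real.sqrt (w t) := by
        rw [Finset.mul_sum, ← Finset.sum_add_distrib]
        exact Finset.sum_congr rfl fun t _ => hterm t
    _ ≤ 2 * (d * Real.sqrt ((T:ℝ)*L)) + 5 * Real.sqrt ((d:ℝ)*T*L*M) := by
        linarith
    _ ≤ 5 * ((d:ℝ) * Real.sqrt ((T:ℝ)*L) + Real.sqrt ((d:ℝ)*T*L*M)) := by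
        have : (0:ℝ) ≤ (d:ℝ) * Real.sqrt ((T:ℝ)*L) := by positivity
        linarith
end
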